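/- arXiv:math/0601397 — 4 statements merged into one kernel-verified Lean document; each statement's English description precedes it below -/
import Mathlib

section
/- (Burnside) Let p be a prime number and let G be a transitive subgroup of the symmetric group S_p on p points. Then G is solvable or the action of G on the p points is doubly transitive (i.e., 2-transitive). -/
open Polynomial

namespace Burnside

variable (p : ℕ) [Fact p.Prime]

/-- Evaluation of polynomials as a linear map into the function space. -/
noncomputable def Emap : Polynomial (ZMod p) →ₗ[ZMod p] (ZMod p → ZMod p) where
  toFun q := fun x => q.eval x
  map_add' := by intros; funext x; simp
  map_smul' := by intros; funext x; simp

/-- Functions given by polynomials of degree `< n`. -/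
noncomputable def L (n : ℕ) : Submodule (ZMod p) (ZMod p → ZMod p) :=
  (Polynomial.degreeLT (ZMod p) n).map (Emap p)

variable {p}

lemma card_zmod : Fintype.card (ZMod p) = p := ZMod.card p

/-- Uniqueness of low-degree polynomial representations. -/
lemma emap_inj {q r : Polynomial (ZMod p)} (hq : q.degree < p) (hr : r.degree < p)
    (h : Emap p q = Emap p r) : q = r := by
  have hsub : (q - r).natDegree < Finset.univ.card (α := ZMod p) := by
    rw [Finset.card_univ, card_zmod]
    have : (q - r).degree < p := lt_of_le_of_lt (Polynomial.degree_sub_le q r) (max_lt hq hr)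
    rcases eq_or_ne (q - r) 0 with h0 | h0
    · simpa [h0] using (Fact.out : p.Prime).pos
    · exact (Polynomial.natDegree_lt_iff_degree_lt h0).2 (by exact_mod_cast this)
  have := Polynomial.eq_zero_of_natDegree_lt_card_of_eval_eq_zero' (q - r) Finset.univ
    (fun i _ => by
      have := congrFun h i
      simp only [Emap, LinearMap.coe_mk, AddHom.coe_mk] at this
      simp [this]) hsub
  exact sub_eq_zero.1 this

/-- Interpolation: every function is a polynomial of degree `< p`. -/
noncomputable def interp (f : ZMod p → ZMod p) : Polynomial (ZMod p) :=
  Lagrange.interpolate Finset.univ id f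

lemma interp_degree (f : ZMod p → ZMod p) : (interp f).degree < p := by
  have := Lagrange.degree_interpolate_lt (v := id) (s := Finset.univ) f
    (Set.injOn_id _)
  rwa [Finset.card_univ, card_zmod] at this

lemma interp_eval (f : ZMod p → ZMod p) : Emap p (interp f) = f := by
  funext x
  have := Lagrange.eval_interpolate_at_node (r := f) (Set.injOn_id _)
    (Finset.mem_univ x)
  simp only [id] at this
  rw [show (Emap p) (interp f) x = (interp f).eval x from rfl, interp, this]

lemma L_top : L p p = ⊤ := by
  rw [eq_top_iff]
  intro f _
  exact ⟨interp f, Polynomial.mem_degreeLT.2 (interp_degree f), interp_eval f⟩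

variable (p : ℕ) [Fact p.Prime] in
/-- Composition with a permutation, as a linear endomorphism of the function space. -/
def T (g : Equiv.Perm (ZMod p)) : Module.End (ZMod p) (ZMod p → ZMod p) where
  toFun f := f ∘ g
  map_add' := by intros; rfl
  map_smul' := by intros; rfl

variable (p : ℕ) [Fact p.Prime]

/-- Translation operator. -/
def tau (a : ZMod p) : Module.End (ZMod p) (ZMod p → ZMod p) := T p (Equiv.addRight a)

/-- Difference operator. -/
def Dop : Module.End (ZMod p) (ZMod p → ZMod p) := tau p 1 - 1

variable {p}

@[simp] lemma T_apply (g : Equiv.Perm (ZMod p)) (f : ZMod p → ZMod p) (x : ZMod p) :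
    T p g f x = f (g x) := rfl

@[simp] lemma tau_apply (a : ZMod p) (f : ZMod p → ZMod p) (x : ZMod p) :
    tau p a f x = f (x + a) := rfl

lemma Dop_apply (f : ZMod p → ZMod p) (x : ZMod p) : Dop p f x = f (x + 1) - f x := rfl

/-- Polynomial-level difference. -/
noncomputable def DP (q : Polynomial (ZMod p)) : Polynomial (ZMod p) :=
  q.comp (X + C 1) - q

lemma Dop_emap (q : Polynomial (ZMod p)) : Dop p ((Emap p) q) = (Emap p) (DP q) := by
  funext x
  show (Emap p q) (x+1) - (Emap p q) x = (DP q).eval x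
  show q.eval (x+1) - q.eval x = (DP q).eval x
  simp [DP]

lemma DP_coeff (q : Polynomial (ZMod p)) (k : ℕ) :
    (DP q).coeff k = (q.hasseDeriv k).eval 1 - q.coeff k := by
  have h : q.comp (X + C 1) = (Polynomial.taylor 1 q : Polynomial (ZMod p)) := by
    rw [Polynomial.taylor_apply]
  rw [DP, Polynomial.coeff_sub, h, Polynomial.taylor_coeff]

lemma DP_zero_of_natDegree_zero {q : Polynomial (ZMod p)} (h : q.natDegree = 0) :
    DP q = 0 := by
  obtain ⟨a, rfl⟩ := Polynomial.natDegree_eq_zero.1 h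
  simp [DP]

lemma hasse_eval_one (q : Polynomial (ZMod p)) (k : ℕ) (hk : q.natDegree ≤ k + 1) :
    (q.hasseDeriv k).eval 1 = q.coeff k + (k+1) * q.coeff (k+1) := by
  have hd : (q.hasseDeriv k).natDegree < 2 := by
    rcases eq_or_ne (q.hasseDeriv k) 0 with h0 | h0
    · simp [h0]
    · have := Polynomial.natDegree_hasseDeriv_le q k
      omega
  rw [Polynomial.eval_eq_sum_range' hd]
  rw [Finset.sum_range_succ, Finset.sum_range_succ, Finset.sum_range_zero]
  simp [Polynomial.hasseDeriv_coeff]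
  rw [Nat.add_comm 1 k, Nat.choose_succ_self_right]
  push_cast
  ring

lemma DP_natDegree_le (q : Polynomial (ZMod p)) : (DP q).natDegree ≤ q.natDegree - 1 := by
  rcases Nat.eq_zero_or_pos q.natDegree with h0 | h1
  · simp [DP_zero_of_natDegree_zero h0]
  · rw [Polynomial.natDegree_le_iff_coeff_eq_zero]
    intro j hj
    have hj' : q.natDegree ≤ j := by omega
    rw [DP_coeff, hasse_eval_one q j (by omega)]
    have h1 : q.coeff (j+1) = 0 := Polynomial.coeff_eq_zero_of_natDegree_lt (by omega)
    rcases eq_or_lt_of_le hj' with he | hlt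
    · rw [← he] at h1 ⊢; rw [h1]; ring
    · rw [h1, Polynomial.coeff_eq_zero_of_natDegree_lt hlt]; ring

lemma DP_natDegree {q : Polynomial (ZMod p)} (hd1 : 1 ≤ q.natDegree) (hdp : q.natDegree < p) :
    DP q ≠ 0 ∧ (DP q).natDegree = q.natDegree - 1 := by
  set d := q.natDegree with hd
  have hcoeff : (DP q).coeff (d - 1) = (d : ZMod p) * q.coeff d := by
    rw [DP_coeff, hasse_eval_one q (d-1) (by omega)]
    rw [show d - 1 + 1 = d by omega]
    push_cast [show ((d - 1 : ℕ) : ZMod p) + 1 = (d : ZMod p) by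
      have : ((d - 1 : ℕ) : ZMod p) + ((1:ℕ) : ZMod p) = ((d - 1 + 1 : ℕ) : ZMod p) := by
        push_cast; ring
      rw [show d - 1 + 1 = d by omega] at this
      simpa using this]
    ring
  have hdne : (d : ZMod p) ≠ 0 := by
    rw [Ne, ZMod.natCast_eq_zero_iff]
    intro hdvd
    exact absurd (Nat.le_of_dvd (by omega) hdvd) (by omega)
  have hqne : q.coeff d ≠ 0 := by
    have : q ≠ 0 := by
      intro h0
      rw [h0, Polynomial.natDegree_zero] at hd; omega
    have h2 := Polynomial.leadingCoeff_ne_zero.2 this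
    rw [Polynomial.leadingCoeff, ← hd] at h2
    exact h2
  have hne : (DP q).coeff (d - 1) ≠ 0 := by
    rw [hcoeff]; exact mul_ne_zero hdne hqne
  have hDPne : DP q ≠ 0 := fun h0 => hne (by simp [h0])
  refine ⟨hDPne, le_antisymm (DP_natDegree_le q) (Polynomial.le_natDegree_of_ne_zero hne)⟩

lemma emap_mem_L {q : Polynomial (ZMod p)} {n : ℕ} (h : q.degree < n) : Emap p q ∈ L p n :=
  ⟨q, Polynomial.mem_degreeLT.2 h, rfl⟩

lemma L_zero : L p 0 = ⊥ := by
  rw [L]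
  apply le_antisymm _ bot_le
  rintro f ⟨q, hq, rfl⟩
  rw [SetLike.mem_coe, Polynomial.mem_degreeLT] at hq
  have : q = 0 := by
    by_contra hne
    exact absurd ((Polynomial.degree_eq_natDegree hne) ▸ hq) (by exact_mod_cast not_lt.2 (Nat.zero_le _))
  simp [this]

lemma L_mono {a b : ℕ} (h : a ≤ b) : L p a ≤ L p b :=
  Submodule.map_mono (fun q hq => Polynomial.mem_degreeLT.2
    (lt_of_lt_of_le (Polynomial.mem_degreeLT.1 hq) (by exact_mod_cast Nat.cast_le.2 h)))

lemma Dop_L {n : ℕ} {f : ZMod p → ZMod p} (hf : f ∈ L p n) : Dop p f ∈ L p (n - 1) := by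
  obtain ⟨q, hq, rfl⟩ := hf
  rw [Dop_emap]
  rcases Nat.eq_zero_or_pos q.natDegree with h0 | h1
  · rw [DP_zero_of_natDegree_zero h0, map_zero]
    exact Submodule.zero_mem _
  · have hq0 : q ≠ 0 := fun h => by rw [h, Polynomial.natDegree_zero] at h1; omega
    have hdeg := Polynomial.mem_degreeLT.1 hq
    have hnd : q.natDegree < n := by
      have := (Polynomial.degree_eq_natDegree hq0) ▸ hdeg
      exact_mod_cast this
    rcases eq_or_ne (DP q) 0 with hDP | hDP
    · rw [hDP, map_zero]; exact Submodule.zero_mem _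
    · apply emap_mem_L
      rw [Polynomial.degree_eq_natDegree hDP]
      have := DP_natDegree_le q
      exact_mod_cast (by omega : (DP q).natDegree < n - 1)

lemma Dop_pow_L {n m : ℕ} {f : ZMod p → ZMod p} (hf : f ∈ L p n) :
    ((Dop p) ^ m) f ∈ L p (n - m) := by
  induction m generalizing f n with
  | zero => simpa using hf
  | succ m ih =>
    have : ((Dop p) ^ (m+1)) f = ((Dop p) ^ m) (Dop p f) := by
      rw [pow_succ]; rfl
    rw [this]
    have := ih (Dop_L hf)
    rwa [show n - 1 - m = n - (m+1) by omega] at this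

lemma degree_lt_of_dop_pow (m : ℕ) (q : Polynomial (ZMod p)) (hq : q.degree < p)
    (h : ((Dop p) ^ m) (Emap p q) = 0) : q.degree < (m : ℕ) := by
  induction m generalizing q with
  | zero =>
    have hz : (0 : Polynomial (ZMod p)).degree < (p : WithBot ℕ) := by
      rw [Polynomial.degree_zero]
      exact WithBot.bot_lt_coe p
    have : q = 0 := emap_inj hq hz (by simpa using h)
    rw [this, Polynomial.degree_zero]
    exact WithBot.bot_lt_coe 0
  | succ m ih =>
    rcases Nat.eq_zero_or_pos q.natDegree with h0 | h1
    · have hle : q.degree ≤ 0 := by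
        obtain ⟨a, ha⟩ := Polynomial.natDegree_eq_zero.1 h0
        rw [← ha]
        exact Polynomial.degree_C_le
      exact lt_of_le_of_lt hle (by exact_mod_cast Nat.succ_pos m)
    · have hq0 : q ≠ 0 := fun hh => by rw [hh, Polynomial.natDegree_zero] at h1; omega
      have hndp : q.natDegree < p := by
        have := (Polynomial.degree_eq_natDegree hq0) ▸ hq
        exact_mod_cast this
      obtain ⟨hDPne, hDPdeg⟩ := DP_natDegree h1 hndp
      have h' : ((Dop p) ^ m) (Emap p (DP q)) = 0 := by
        rw [← Dop_emap]
        have : ((Dop p) ^ (m+1)) (Emap p q) = ((Dop p) ^ m) (Dop p (Emap p q)) := by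
          rw [pow_succ]; rfl
        rw [← this, h]
      have hDPq : (DP q).degree < p := by
        rw [Polynomial.degree_eq_natDegree hDPne]
        exact_mod_cast (by omega : (DP q).natDegree < p)
      have := ih (DP q) hDPq h'
      rw [Polynomial.degree_eq_natDegree hDPne, hDPdeg] at this
      rw [Polynomial.degree_eq_natDegree hq0]
      exact_mod_cast (by
        have : q.natDegree - 1 < m := by exact_mod_cast this
        omega : q.natDegree < m + 1)

lemma ker_dop_pow (m : ℕ) : LinearMap.ker ((Dop p) ^ m) = L p m := by
  ext f
  constructor
  · intro hf
    have hmem : f ∈ L p p := L_top (p := p) ▸ Submodule.mem_top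
    have : (Dop p ^ m) (Emap p (interp f)) = 0 := by
      rw [interp_eval]; exact hf
    exact interp_eval f ▸ emap_mem_L (degree_lt_of_dop_pow m _ (interp_degree f) this)
  · intro hf
    have := Dop_pow_L (m := m) hf
    rw [Nat.sub_self, L_zero] at this
    simpa using this

lemma L_le_L {a b : ℕ} (ha : a ≤ p) (h : L p a ≤ L p b) : a ≤ b := by
  by_contra hab
  push_neg at hab
  have h1 : 1 ≤ a := by omega
  have hmem : Emap p (X ^ (a-1) : Polynomial (ZMod p)) ∈ L p b := by
    apply h
    apply emap_mem_L
    rw [Polynomial.degree_X_pow]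
    exact_mod_cast (by omega : a - 1 < a)
  obtain ⟨r, hr, hre⟩ := hmem
  rw [SetLike.mem_coe, Polynomial.mem_degreeLT] at hr
  have hXdeg : (X ^ (a-1) : Polynomial (ZMod p)).degree < (p : WithBot ℕ) := by
    rw [Polynomial.degree_X_pow]
    exact_mod_cast (by omega : a - 1 < p)
  have hrdeg : r.degree < (p : WithBot ℕ) :=
    lt_of_lt_of_le hr (by exact_mod_cast (by omega : b ≤ p))
  have : (X ^ (a-1) : Polynomial (ZMod p)) = r := emap_inj hXdeg hrdeg hre.symm
  rw [← this, Polynomial.degree_X_pow] at hr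
  have : a - 1 < b := by exact_mod_cast hr
  omega

lemma xpow_in_L {j b : ℕ} (hj : j < p) (hb : b ≤ p)
    (h : Emap p ((X : Polynomial (ZMod p)) ^ j) ∈ L p b) : j < b := by
  obtain ⟨r, hr, hre⟩ := h
  rw [SetLike.mem_coe, Polynomial.mem_degreeLT] at hr
  have hXdeg : ((X : Polynomial (ZMod p)) ^ j).degree < (p : WithBot ℕ) := by
    rw [Polynomial.degree_X_pow]
    exact_mod_cast hj
  have hrdeg : r.degree < (p : WithBot ℕ) :=
    lt_of_lt_of_le hr (by exact_mod_cast hb)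
  have : ((X : Polynomial (ZMod p)) ^ j) = r := emap_inj hXdeg hrdeg hre.symm
  rw [← this, Polynomial.degree_X_pow] at hr
  exact_mod_cast hr

lemma L_one_const {f : ZMod p → ZMod p} (hf : f ∈ L p 1) (x y : ZMod p) : f x = f y := by
  obtain ⟨q, hq, rfl⟩ := hf
  rw [SetLike.mem_coe, Polynomial.mem_degreeLT] at hq
  have hq0 : q.natDegree = 0 := by
    rcases eq_or_ne q 0 with h | h
    · rw [h]; simp
    · rw [Polynomial.degree_eq_natDegree h] at hq
      exact_mod_cast Nat.lt_one_iff.1 (by exact_mod_cast hq)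
  obtain ⟨a, ha⟩ := Polynomial.natDegree_eq_zero.1 hq0
  show q.eval x = q.eval y
  rw [← ha]
  simp

/-- A subspace invariant under translation that contains a function of degree `n`
contains all of `L (n+1)`. -/
lemma gen_lemma (W : Submodule (ZMod p) (ZMod p → ZMod p))
    (hW : ∀ f ∈ W, tau p 1 f ∈ W) :
    ∀ n : ℕ, ∀ q : Polynomial (ZMod p), q ≠ 0 → q.natDegree = n → n < p →
      Emap p q ∈ W → L p (n+1) ≤ W := by
  have hDW : ∀ f ∈ W, Dop p f ∈ W := fun f hf => by
    have : Dop p f = tau p 1 f - f := rfl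
    rw [this]
    exact Submodule.sub_mem _ (hW f hf) hf
  intro n
  induction n using Nat.strong_induction_on with
  | _ n ih =>
    intro q hq0 hqdeg hnp hqW
    rintro f ⟨r, hr, rfl⟩
    rw [SetLike.mem_coe, Polynomial.mem_degreeLT] at hr
    have key : ∀ r' : Polynomial (ZMod p), r'.degree < (n : WithBot ℕ) → Emap p r' ∈ W := by
      intro r' hr'
      rcases Nat.eq_zero_or_pos n with h0 | h1
      · have : r' = 0 := by
          by_contra hne
          rw [Polynomial.degree_eq_natDegree hne, h0] at hr'
          exact absurd hr' (by exact_mod_cast not_lt.2 (Nat.zero_le _))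
        simp [this]
      · -- use induction hypothesis with DP q
        have hq1 : 1 ≤ q.natDegree := by omega
        obtain ⟨hDPne, hDPdeg⟩ := DP_natDegree hq1 (by omega)
        have : L p ((n-1)+1) ≤ W := by
          apply ih (n-1) (by omega) (DP q) hDPne (by omega) (by omega)
          rw [← Dop_emap]
          exact hDW _ hqW
        rw [show n - 1 + 1 = n by omega] at this
        exact this (emap_mem_L hr')
    -- now subtract a multiple of q from r
    set c : ZMod p := r.coeff n * (q.coeff n)⁻¹ with hc
    have hqn : q.coeff n ≠ 0 := by
      rw [← hqdeg]
      exact Polynomial.leadingCoeff_ne_zero.2 hq0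
    have hr' : (r - c • q).degree < (n : WithBot ℕ) := by
      rcases eq_or_ne (r - c • q) 0 with he | hne
      · rw [he, Polynomial.degree_zero]
        exact WithBot.bot_lt_coe n
      · rw [Polynomial.degree_eq_natDegree hne]
        have hnd : (r - c • q).natDegree < n := by
          have hle : (r - c • q).natDegree ≤ n - 1 := by
            rw [Polynomial.natDegree_le_iff_coeff_eq_zero]
            intro j hj
            rw [Polynomial.coeff_sub, Polynomial.coeff_smul]
            rcases eq_or_lt_of_le (show n ≤ j by omega) with hee | hlt
            · rw [← hee, hc, smul_eq_mul]
              field_simp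
              ring
            · have h1 : r.coeff j = 0 := by
                apply Polynomial.coeff_eq_zero_of_degree_lt
                exact lt_of_lt_of_le hr (by exact_mod_cast hlt)
              have h2 : q.coeff j = 0 := Polynomial.coeff_eq_zero_of_natDegree_lt (by omega)
              rw [h1, h2, smul_eq_mul, mul_zero, sub_zero]
          -- n ≥ 1 needed: if n = 0 then r - c•q = 0? handle:
          rcases Nat.eq_zero_or_pos n with h0 | h1
          · exfalso
            apply hne
            have hrn : r.natDegree = 0 := by
              by_contra hrn
              have hrne : r ≠ 0 := fun hh => hrn (by rw [hh]; simp)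
              rw [Polynomial.degree_eq_natDegree hrne, h0] at hr
              exact hrn (by exact_mod_cast Nat.lt_one_iff.1 (by exact_mod_cast hr))
            have hrC := Polynomial.eq_C_of_natDegree_eq_zero hrn
            have hqC := Polynomial.eq_C_of_natDegree_eq_zero (h0 ▸ hqdeg)
            rw [hrC, hqC, Polynomial.smul_C, ← Polynomial.C_sub, hc, h0]
            rw [show r.coeff n = r.coeff 0 by rw [h0], show q.coeff n = q.coeff 0 by rw [h0]] at *
            rw [smul_eq_mul]
            field_simp
            simp
          · omega
        exact_mod_cast hnd
    have : Emap p r = Emap p (r - c • q) + c • Emap p q := by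
      rw [← map_smul, ← map_add]
      congr 1
      ring
    rw [this]
    exact Submodule.add_mem _ (key _ hr') (Submodule.smul_mem _ _ hqW)

/-- Any translation-invariant subspace is one of the `L n`. -/
lemma chain_lemma (W : Submodule (ZMod p) (ZMod p → ZMod p))
    (hW : ∀ f ∈ W, tau p 1 f ∈ W) : ∃ n ≤ p, W = L p n := by
  have hex : ∃ n : ℕ, W ≤ L p n := ⟨p, by rw [L_top]; exact le_top⟩
  classical
  set n₀ := Nat.find hex with hn₀
  have hle : W ≤ L p n₀ := Nat.find_spec hex
  have hn₀p : n₀ ≤ p := Nat.find_le (by rw [L_top]; exact le_top)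
  refine ⟨n₀, hn₀p, ?_⟩
  rcases Nat.eq_zero_or_pos n₀ with h0 | h1
  · rw [h0] at hle ⊢
    rw [L_zero] at hle ⊢
    exact le_antisymm hle bot_le
  · obtain ⟨m, hm⟩ : ∃ m, n₀ = m + 1 := ⟨n₀ - 1, by omega⟩
    have hnotle : ¬ W ≤ L p m := Nat.find_min hex (by omega)
    obtain ⟨f, hfW, hfm⟩ := SetLike.not_le_iff_exists.1 hnotle
    set q := interp f with hq
    have hfq : Emap p q = f := interp_eval f
    have hq0 : q ≠ 0 := by
      intro hh
      apply hfm
      rw [← hfq, hh, map_zero]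
      exact Submodule.zero_mem _
    have hqub : q.natDegree ≤ m := by
      obtain ⟨r, hr, hre⟩ := hle hfW
      rw [SetLike.mem_coe, Polynomial.mem_degreeLT] at hr
      have : q = r := emap_inj (interp_degree f) (lt_of_lt_of_le hr
        (by exact_mod_cast (by omega : n₀ ≤ p))) (by rw [hfq, hre])
      rw [this]
      by_contra hh
      rw [Polynomial.degree_eq_natDegree (fun h => hq0 (this ▸ h))] at hr
      rw [hm] at hr
      have : r.natDegree < m + 1 := by exact_mod_cast hr
      omega
    have hqlb : m ≤ q.natDegree := by
      by_contra hh
      push_neg at hh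
      apply hfm
      rw [← hfq]
      apply emap_mem_L
      rw [Polynomial.degree_eq_natDegree hq0]
      exact_mod_cast hh
    have hqdeg : q.natDegree = m := le_antisymm hqub hqlb
    have := gen_lemma W hW m q hq0 hqdeg (by omega) (hfq ▸ hfW)
    rw [hm]
    exact le_antisymm (hm ▸ hle) this

lemma addRight_pow (n : ℕ) :
    (Equiv.addRight (1 : ZMod p)) ^ n = Equiv.addRight (n : ZMod p) := by
  induction n with
  | zero => ext x; simp
  | succ n ih =>
    ext x
    rw [pow_succ]
    simp only [Equiv.Perm.mul_apply, ih, Equiv.coe_addRight]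
    push_cast
    ring

lemma addRight_mem {H : Subgroup (Equiv.Perm (ZMod p))}
    (h1 : Equiv.addRight (1 : ZMod p) ∈ H) (c : ZMod p) : Equiv.addRight c ∈ H := by
  have := H.pow_mem h1 c.val
  rwa [addRight_pow, ZMod.natCast_val, ZMod.cast_id] at this

lemma affine_of_natDegree_le_one {g : Equiv.Perm (ZMod p)}
    (h : (interp (⇑g : ZMod p → ZMod p)).natDegree ≤ 1) :
    ∃ a b : ZMod p, a ≠ 0 ∧ ∀ x, g x = a * x + b := by
  set q := interp (⇑g : ZMod p → ZMod p) with hq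
  have heval : ∀ x, q.eval x = g x := fun x => congrFun (interp_eval _) x
  have hp2 : 2 ≤ p := (Fact.out : p.Prime).two_le
  have hgne : ∃ x y : ZMod p, g x ≠ g y := by
    refine ⟨1, 0, fun hh => ?_⟩
    have : (1 : ZMod p) = 0 := g.injective hh
    exact one_ne_zero this
  have hd1 : q.natDegree = 1 := by
    rcases Nat.eq_zero_or_pos q.natDegree with h0 | hpos
    · exfalso
      obtain ⟨x, y, hxy⟩ := hgne
      obtain ⟨a, ha⟩ := Polynomial.natDegree_eq_zero.1 h0
      apply hxy
      rw [← heval, ← heval, ← ha]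
      simp
    · omega
  have hform := Polynomial.eq_X_add_C_of_natDegree_le_one h
  refine ⟨q.coeff 1, q.coeff 0, ?_, fun x => ?_⟩
  · intro hh
    have : q.natDegree = 0 := by
      rw [hform, hh]
      simp
    omega
  · rw [← heval x]
    conv_lhs => rw [hform]
    rw [Polynomial.eval_add, Polynomial.eval_mul, Polynomial.eval_C, Polynomial.eval_X,
      Polynomial.eval_C]

lemma tau_comm (a b : ZMod p) : Commute (tau p a) (tau p b) := by
  show _ * _ = _ * _
  refine LinearMap.ext fun f => funext fun x => ?_
  simp only [Module.End.mul_apply, tau_apply]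
  ring_nf

theorem aux {p : ℕ} [Fact p.Prime] (H : Subgroup (Equiv.Perm (ZMod p)))
    (h1 : Equiv.addRight (1 : ZMod p) ∈ H) :
    (∀ g ∈ H, ∃ a b : ZMod p, a ≠ 0 ∧ ∀ x, g x = a * x + b) ∨
    (∀ s t : ZMod p, s ≠ 0 → t ≠ 0 → ∃ g ∈ H, g 0 = 0 ∧ g s = t) := by
  classical
  by_cases haff : ∀ g ∈ H, ∃ a b : ZMod p, a ≠ 0 ∧ ∀ x, g x = a * x + b
  · exact Or.inl haff
  right
  push_neg at haff
  obtain ⟨g₀, hg₀H, hg₀⟩ := haff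
  intro s t hs ht
  by_contra hno
  push_neg at hno
  -- the difference set
  set D : Finset (ZMod p) :=
    Finset.univ.filter (fun y => ∃ k ∈ H, ∃ z : ZMod p, k (z + s) - k z = y) with hD
  have hsD : s ∈ D := by
    rw [hD, Finset.mem_filter]
    exact ⟨Finset.mem_univ _, 1, H.one_mem, 0, by simp⟩
  have h0D : (0 : ZMod p) ∉ D := by
    rw [hD, Finset.mem_filter]
    rintro ⟨-, k, hk, z, hz⟩
    rw [sub_eq_zero] at hz
    have := k.injective hz
    exact hs (by linear_combination this)
  have htD : t ∉ D := by
    rw [hD, Finset.mem_filter]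
    rintro ⟨-, k, hk, z, hz⟩
    set g : Equiv.Perm (ZMod p) :=
      (Equiv.addRight (- k z)) * k * (Equiv.addRight z) with hg
    have hgH : g ∈ H := H.mul_mem (H.mul_mem (addRight_mem h1 _) hk) (addRight_mem h1 _)
    have hg0 : g 0 = 0 := by
      rw [hg]
      simp [Equiv.Perm.mul_apply]
    have hgs : g s = t := by
      rw [hg]
      simp only [Equiv.Perm.mul_apply, Equiv.coe_addRight]
      rw [add_comm s z] at *
      linear_combination hz
    exact hno g hgH hg0 hgs
  have hclos : ∀ y ∈ D, ∀ g ∈ H, ∀ x : ZMod p, g (x + y) - g x ∈ D := by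
    intro y hy g hg x
    rw [hD, Finset.mem_filter] at hy ⊢
    obtain ⟨-, k, hk, z, hz⟩ := hy
    refine ⟨Finset.mem_univ _, g * ((Equiv.addRight (x - k z)) * k), H.mul_mem hg
      (H.mul_mem (addRight_mem h1 _) hk), z, ?_⟩
    simp only [Equiv.Perm.mul_apply, Equiv.coe_addRight]
    rw [show k (z + s) + (x - k z) = x + y by linear_combination hz,
      show k z + (x - k z) = x by ring]
  -- the operator B
  set B : Module.End (ZMod p) (ZMod p → ZMod p) := ∑ d ∈ D, (tau p d - 1) with hB
  have hBapply : ∀ (f : ZMod p → ZMod p) (x : ZMod p),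
      B f x = ∑ d ∈ D, (f (x + d) - f x) := by
    intro f x
    rw [hB, LinearMap.coe_sum, Finset.sum_apply, Finset.sum_apply]
    exact Finset.sum_congr rfl fun d _ => rfl
  have hBtau : ∀ a : ZMod p, Commute B (tau p a) := by
    intro a
    apply Commute.sum_left
    intro d _
    exact Commute.sub_left (tau_comm d a) (Commute.one_left _)
  have hBDop : Commute B (Dop p) := (hBtau 1).sub_right (Commute.one_right _)
  have hBDopPow : ∀ m : ℕ, Commute B ((Dop p) ^ m) := fun m => (hBDop).pow_right m
  have hBT : ∀ g ∈ H, (T p g) * B = B * (T p g) := by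
    intro g hg
    refine LinearMap.ext fun f => funext fun x => ?_
    show B f (g x) = (B (f ∘ g)) x
    rw [hBapply, hBapply]
    have : ∀ d ∈ D, (f ∘ g) (x + d) - (f ∘ g) x = f (g x + (g (x+d) - g x)) - f (g x) := by
      intro d _
      simp only [Function.comp_apply]
      rw [show g x + (g (x + d) - g x) = g (x + d) by ring]
    rw [Finset.sum_congr rfl this]
    refine (Finset.sum_nbij' (fun d => g (x + d) - g x) (fun d' => g⁻¹ (g x + d') - x)
      ?_ ?_ ?_ ?_ ?_).symm
    · intro d hd
      exact hclos d hd g hg x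
    · intro d' hd'
      have := hclos d' hd' g⁻¹ (H.inv_mem hg) (g x)
      rwa [show (g⁻¹ : Equiv.Perm (ZMod p)) (g x) = x from g.symm_apply_apply x] at this
    · intro d hd
      show (g⁻¹ : Equiv.Perm (ZMod p)) (g x + (g (x + d) - g x)) - x = d
      rw [show g x + (g (x + d) - g x) = g (x + d) by ring]
      rw [show (g⁻¹ : Equiv.Perm (ZMod p)) (g (x+d)) = x + d from g.symm_apply_apply _]
      ring
    · intro d' hd'
      show g (x + ((g⁻¹ : Equiv.Perm (ZMod p)) (g x + d') - x)) - g x = d'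
      rw [show x + ((g⁻¹ : Equiv.Perm (ZMod p)) (g x + d') - x)
          = (g⁻¹ : Equiv.Perm (ZMod p)) (g x + d') by ring]
      rw [show g ((g⁻¹ : Equiv.Perm (ZMod p)) (g x + d')) = g x + d' from g.apply_symm_apply _]
      ring
    · intro d hd
      rfl
  -- B kills constants
  have hBL1 : ∀ f ∈ L p 1, B f = 0 := by
    rintro f ⟨q, hq, rfl⟩
    rw [SetLike.mem_coe, Polynomial.mem_degreeLT] at hq
    have : ∀ x y : ZMod p, (Emap p q) x = (Emap p q) y := by
      intro x y
      have hq0 : q.natDegree = 0 := by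
        rcases eq_or_ne q 0 with h | h
        · rw [h]; simp
        · rw [Polynomial.degree_eq_natDegree h] at hq
          exact_mod_cast Nat.lt_one_iff.1 (by exact_mod_cast hq)
      obtain ⟨a, ha⟩ := Polynomial.natDegree_eq_zero.1 hq0
      show q.eval x = q.eval y
      rw [← ha]
      simp
    funext x
    rw [hBapply]
    apply Finset.sum_eq_zero
    intro d _
    rw [this (x + d) x, sub_self]
  have hp1 : 1 ≤ p := (Fact.out : p.Prime).pos
  -- B lowers the filtration
  have hBdrop : ∀ n : ℕ, ∀ f ∈ L p n, B f ∈ L p (n - 1) := by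
    intro n f hf
    rcases Nat.eq_zero_or_pos n with h0 | h1
    · rw [h0, L_zero] at hf
      rw [Submodule.mem_bot] at hf
      rw [hf, map_zero, h0]
      exact Submodule.zero_mem _
    · have h2 : ((Dop p) ^ (n-1)) (B f) = B (((Dop p) ^ (n-1)) f) := by
        have := (hBDopPow (n-1)).symm
        calc ((Dop p) ^ (n-1)) (B f) = (((Dop p) ^ (n-1)) * B) f := rfl
          _ = (B * ((Dop p) ^ (n-1))) f := by rw [this]
          _ = B (((Dop p) ^ (n-1)) f) := rfl
      have h3 : ((Dop p) ^ (n-1)) f ∈ L p 1 := by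
        have := Dop_pow_L (m := n - 1) hf
        rwa [show n - (n-1) = 1 by omega] at this
      have : ((Dop p) ^ (n-1)) (B f) = 0 := by rw [h2, hBL1 _ h3]
      have := (LinearMap.mem_ker (f := (Dop p)^(n-1))).2 this
      rwa [ker_dop_pow (n-1)] at this
  -- the filtration
  set W : ℕ → Submodule (ZMod p) (ZMod p → ZMod p) :=
    fun m => Nat.rec ⊤ (fun _ Wm => Wm.map B) m with hW
  have hW0 : W 0 = ⊤ := rfl
  have hWsucc : ∀ m, W (m+1) = (W m).map B := fun m => rfl
  have hW1 : W 1 = Submodule.map B (W 0) := hWsucc 0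
  have hWtau : ∀ m, ∀ f ∈ W m, tau p 1 f ∈ W m := by
    intro m
    induction m with
    | zero => intro f _; exact Submodule.mem_top
    | succ m ih =>
      rintro f hf
      rw [hWsucc] at hf ⊢
      obtain ⟨u, hu, rfl⟩ := hf
      refine ⟨tau p 1 u, ih u hu, ?_⟩
      calc B (tau p 1 u) = (B * (tau p 1)) u := rfl
        _ = ((tau p 1) * B) u := by rw [(hBtau 1).eq]
        _ = tau p 1 (B u) := rfl
  have hWT : ∀ g ∈ H, ∀ m, ∀ f ∈ W m, T p g f ∈ W m := by
    intro g hg m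
    induction m with
    | zero => intro f _; exact Submodule.mem_top
    | succ m ih =>
      rintro f hf
      rw [hWsucc] at hf ⊢
      obtain ⟨u, hu, rfl⟩ := hf
      refine ⟨T p g u, ih u hu, ?_⟩
      calc B (T p g u) = (B * (T p g)) u := rfl
        _ = ((T p g) * B) u := by rw [hBT g hg]
        _ = T p g (B u) := rfl
  choose nseq hnle hnW using fun m => chain_lemma (W m) (hWtau m)
  -- kernel of B
  have hkerW : ∀ f ∈ LinearMap.ker B, tau p 1 f ∈ LinearMap.ker B := by
    intro f hf
    rw [LinearMap.mem_ker] at hf ⊢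
    calc B (tau p 1 f) = (B * tau p 1) f := rfl
      _ = ((tau p 1) * B) f := by rw [(hBtau 1).eq]
      _ = tau p 1 (B f) := rfl
      _ = 0 := by rw [hf, map_zero]
  obtain ⟨tk, htkp, htk⟩ := chain_lemma (LinearMap.ker B) hkerW
  have hn0 : nseq 0 = p := by
    have h2 := hnW 0
    rw [hW0] at h2
    have h3 : L p p ≤ L p (nseq 0) := by rw [← h2, L_top]
    exact le_antisymm (hnle 0) (L_le_L (le_refl p) h3)
  have hdec : ∀ m, nseq (m+1) ≤ nseq m - 1 := by
    intro m
    have hsub : W (m+1) ≤ L p (nseq m - 1) := by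
      rw [hWsucc, hnW m]
      rintro f ⟨u, hu, rfl⟩
      exact hBdrop _ u hu
    have h2 : L p (nseq (m+1)) ≤ L p (nseq m - 1) := by rw [← hnW (m+1)]; exact hsub
    exact L_le_L (hnle (m+1)) h2
  have hmono : ∀ m, nseq (m+1) ≤ nseq m := fun m => le_trans (hdec m) (Nat.sub_le _ _)
  have hcommBDop : ∀ (m : ℕ) (f : ZMod p → ZMod p),
      ((Dop p) ^ m) (B f) = B (((Dop p) ^ m) f) := by
    intro m f
    calc ((Dop p) ^ m) (B f) = (((Dop p) ^ m) * B) f := rfl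
      _ = (B * ((Dop p) ^ m)) f := by rw [(hBDopPow m).eq]
      _ = B (((Dop p) ^ m) f) := rfl
  have hlow : ∀ m, nseq m ≤ tk + nseq (m+1) := by
    intro m
    rcases Nat.eq_zero_or_pos (nseq m) with h0 | h1
    · omega
    by_cases hbig : p ≤ tk + nseq (m+1)
    · exact le_trans (hnle m) hbig
    push_neg at hbig
    have hfmem : Emap p ((X : Polynomial (ZMod p)) ^ (nseq m - 1)) ∈ W m := by
      rw [hnW m]
      exact emap_mem_L (by
        rw [Polynomial.degree_X_pow]
        exact_mod_cast (by omega : nseq m - 1 < nseq m))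
    have hBf : B (Emap p ((X : Polynomial (ZMod p)) ^ (nseq m - 1))) ∈ L p (nseq (m+1)) := by
      rw [← hnW (m+1), hWsucc]
      exact ⟨_, hfmem, rfl⟩
    have h2 : ((Dop p) ^ (nseq (m+1))) (B (Emap p ((X : Polynomial (ZMod p)) ^ (nseq m - 1)))) = 0 := by
      rw [← ker_dop_pow (nseq (m+1))] at hBf
      exact LinearMap.mem_ker.1 hBf
    rw [hcommBDop] at h2
    have h4 : ((Dop p) ^ (nseq (m+1))) (Emap p ((X : Polynomial (ZMod p)) ^ (nseq m - 1)))
        ∈ L p tk := by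
      rw [← htk]
      exact LinearMap.mem_ker.2 h2
    have h5 : ((Dop p) ^ (tk + nseq (m+1))) (Emap p ((X : Polynomial (ZMod p)) ^ (nseq m - 1)))
        = 0 := by
      rw [pow_add]
      show ((Dop p) ^ tk) (((Dop p) ^ (nseq (m+1))) _) = 0
      rw [← ker_dop_pow tk] at h4
      exact LinearMap.mem_ker.1 h4
    have h6 : Emap p ((X : Polynomial (ZMod p)) ^ (nseq m - 1)) ∈ L p (tk + nseq (m+1)) := by
      rw [← ker_dop_pow (tk + nseq (m+1))]
      exact LinearMap.mem_ker.2 h5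
    have := xpow_in_L (by
        have := hnle m
        omega : nseq m - 1 < p) (by omega) h6
    omega
  have hn1tk : nseq 1 + tk ≤ p := by
    have hsub : W 1 ≤ L p (p - tk) := by
      rw [hW1, hW0]
      rintro f ⟨u, -, rfl⟩
      have hu : u ∈ L p p := by rw [L_top]; trivial
      have h3 : ((Dop p) ^ (p - tk)) u ∈ L p tk := by
        have := Dop_pow_L (m := p - tk) hu
        rwa [show p - (p - tk) = tk by omega] at this
      have h4 : ((Dop p) ^ (p - tk)) (B u) = 0 := by
        rw [hcommBDop]
        rw [← htk] at h3
        exact LinearMap.mem_ker.1 h3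
      rw [← ker_dop_pow (p - tk)]
      exact LinearMap.mem_ker.2 h4
    have h5 : L p (nseq 1) ≤ L p (p - tk) := by rw [← hnW 1]; exact hsub
    have := L_le_L (hnle 1) h5
    omega
  by_cases hdeg : nseq 1 ≤ 1
  · -- degenerate case : B of the delta function is constant
    set δ : ZMod p → ZMod p := fun x => if x = 0 then 1 else 0 with hδ
    have hmem : B δ ∈ L p 1 := by
      have h2 : B δ ∈ W 1 := by
        rw [hW1, hW0]
        exact ⟨δ, trivial, rfl⟩
      rw [hnW 1] at h2
      exact L_mono hdeg h2
    have hval : ∀ u : ZMod p, u ∉ D → u ≠ 0 → B δ (-u) = 0 := by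
      intro u hu hune
      rw [hBapply]
      apply Finset.sum_eq_zero
      intro d hd
      have h1 : δ (-u + d) = 0 := by
        rw [hδ]
        simp only [ite_eq_right_iff]
        intro hh
        exfalso
        have hdu : d = u := by linear_combination hh
        exact hu (hdu ▸ hd)
      have h2 : δ (-u) = 0 := by
        rw [hδ]
        simp only [ite_eq_right_iff]
        intro hh
        exact absurd (by linear_combination (-1 : ZMod p) * hh : u = 0) hune
      rw [h1, h2, sub_zero]
    have hvs : B δ (-s) = 1 := by
      rw [hBapply]
      have hterm : ∀ d ∈ D, δ (-s + d) - δ (-s) = if d = s then 1 else 0 := by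
        intro d hd
        have h2 : δ (-s) = 0 := by
          rw [hδ]
          simp only [ite_eq_right_iff]
          intro hh
          exact absurd (by linear_combination (-1 : ZMod p) * hh : s = 0) hs
        rw [h2, sub_zero]
        show (if -s + d = 0 then (1 : ZMod p) else 0) = if d = s then 1 else 0
        have hiff : (-s + d = 0) ↔ (d = s) := by
          constructor
          · intro hh; linear_combination hh
          · intro hh; rw [hh]; ring
        simp only [hiff]
      rw [Finset.sum_congr rfl hterm, Finset.sum_ite_eq' D s (fun _ => (1 : ZMod p))]
      simp [hsD]
    have hvt : B δ (-t) = 0 := hval t htD ht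
    have := L_one_const hmem (-s) (-t)
    rw [hvs, hvt] at this
    exact one_ne_zero this
  · push_neg at hdeg
    have hex : ∃ m, nseq (m+1) ≤ 1 := by
      by_contra hc
      push_neg at hc
      have hstep : ∀ j, nseq (j+1) + j ≤ nseq 1 := by
        intro j
        induction j with
        | zero => simp
        | succ j ih =>
          have h2 := hdec (j+1)
          have h3 := hc (j+1)
          omega
      have h4 := hstep (nseq 1)
      have h5 := hc (nseq 1)
      omega
    classical
    set M := Nat.find hex with hMdef
    have hM1 : nseq (M+1) ≤ 1 := Nat.find_spec hex
    have hMpos : 1 ≤ M := by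
      rcases Nat.eq_zero_or_pos M with h0 | h1
      · exfalso
        rw [h0, Nat.zero_add] at hM1
        omega
      · exact h1
    have hMge : 2 ≤ nseq M := by
      have h2 := Nat.find_min hex (show M - 1 < M by omega)
      rw [show M - 1 + 1 = M by omega] at h2
      omega
    have hMle : nseq M ≤ nseq 1 := by
      have hgen : ∀ j, nseq (1 + j) ≤ nseq 1 := by
        intro j
        induction j with
        | zero => exact le_refl _
        | succ j ih =>
          refine le_trans ?_ ih
          rw [show 1 + (j+1) = (1+j)+1 by omega]
          exact hmono (1+j)
      have := hgen (M - 1)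
      rwa [show 1 + (M-1) = M by omega] at this
    have hN2 : 2 * nseq M ≤ p + 1 := by
      have := hlow M
      omega
    set N := nseq M with hNdef
    have hWM : W M = L p N := hnW M
    have hNp : N ≤ p := hnle M
    -- the power lemma : every element of H is affine
    have haffall : ∀ g ∈ H, ∃ a b : ZMod p, a ≠ 0 ∧ ∀ x, g x = a * x + b := by
      intro g hg
      apply affine_of_natDegree_le_one
      set q := interp (⇑g : ZMod p → ZMod p) with hq
      have hqe : Emap p q = ⇑g := interp_eval _
      have heval : ∀ x, q.eval x = g x := fun x => congrFun hqe x
      have hqdeg := interp_degree (⇑g : ZMod p → ZMod p)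
      have hgL : (⇑g : ZMod p → ZMod p) ∈ L p N := by
        have hX : Emap p (X : Polynomial (ZMod p)) ∈ W M := by
          rw [hWM]
          exact emap_mem_L (by
            rw [Polynomial.degree_X]
            exact_mod_cast (by omega : 1 < N))
        have h2 := hWT g hg M _ hX
        rw [hWM] at h2
        have heq : T p g (Emap p (X : Polynomial (ZMod p))) = ⇑g := by
          funext x
          show (X : Polynomial (ZMod p)).eval (g x) = g x
          simp
        rwa [heq] at h2
      obtain ⟨r, hr, hre⟩ := hgL
      rw [SetLike.mem_coe, Polynomial.mem_degreeLT] at hr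
      have hqr : q = r := emap_inj hqdeg
        (lt_of_lt_of_le hr (by exact_mod_cast hNp)) (by rw [hqe, hre])
      have hqN : q.degree < (N : WithBot ℕ) := hqr ▸ hr
      by_contra hd2'
      push_neg at hd2'
      have hd2 : 2 ≤ q.natDegree := hd2'
      set d := q.natDegree with hdd
      have hq0 : q ≠ 0 := by
        intro h0
        rw [h0, Polynomial.natDegree_zero] at hdd
        omega
      have hdN : d ≤ N - 1 := by
        rw [Polynomial.degree_eq_natDegree hq0] at hqN
        have : d < N := by exact_mod_cast hqN
        omega
      set k := N - 1 with hk
      set j := k / d + 1 with hj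
      have hdm := Nat.div_add_mod k d
      have hmodlt : k % d < d := Nat.mod_lt _ (by omega)
      have hjd : j * d = d * (k / d) + d := by rw [hj]; ring
      have hjd1 : k + 1 ≤ j * d := by omega
      have hdivle : d * (k / d) ≤ k := by omega
      have hjd2 : j * d ≤ k + d := by omega
      have hk2 : 2 ≤ k := by omega
      have hjk : j ≤ k := by
        have hdiv2 : k / d ≤ k / 2 := Nat.div_le_div_left hd2 (by omega)
        have h22 := Nat.div_add_mod k 2
        have h23 : k % 2 < 2 := Nat.mod_lt _ (by omega)
        omega
      have hjdp : j * d ≤ p - 1 := by omega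
      have hXj : Emap p ((X : Polynomial (ZMod p)) ^ j) ∈ W M := by
        rw [hWM]
        exact emap_mem_L (by
          rw [Polynomial.degree_X_pow]
          exact_mod_cast (by omega : j < N))
      have hTXj := hWT g hg M _ hXj
      rw [hWM] at hTXj
      have heq2 : T p g (Emap p ((X : Polynomial (ZMod p)) ^ j)) = Emap p (q ^ j) := by
        funext x
        show ((X : Polynomial (ZMod p)) ^ j).eval (g x) = (q ^ j).eval x
        rw [Polynomial.eval_pow, Polynomial.eval_pow, Polynomial.eval_X, heval]
      rw [heq2] at hTXj
      obtain ⟨r2, hr2, hre2⟩ := hTXj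
      rw [SetLike.mem_coe, Polynomial.mem_degreeLT] at hr2
      have hqj0 : q ^ j ≠ 0 := pow_ne_zero j hq0
      have hqjnat : (q ^ j).natDegree = j * d := by
        rw [Polynomial.natDegree_pow]
      have hqjdeg : (q ^ j).degree < (p : WithBot ℕ) := by
        rw [Polynomial.degree_eq_natDegree hqj0, hqjnat]
        exact_mod_cast (by omega : j * d < p)
      have heq3 : q ^ j = r2 := emap_inj hqjdeg
        (lt_of_lt_of_le hr2 (by exact_mod_cast hNp)) hre2.symm
      rw [← heq3, Polynomial.degree_eq_natDegree hqj0, hqjnat] at hr2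
      have : j * d < N := by exact_mod_cast hr2
      omega
    obtain ⟨a, b, ha, hab⟩ := haffall g₀ hg₀H
    obtain ⟨x, hx⟩ := hg₀ a b ha
    exact hx (hab x)

end Burnside

open Burnside in
/-- **Burnside's theorem.** A transitive subgroup of the symmetric group on `p` points,
`p` prime, is solvable or doubly transitive. -/
theorem solvable_or_two_transitive_of_transitive_prime_degree
    (p : ℕ) (hp : p.Prime) (G : Subgroup (Equiv.Perm (Fin p)))
    (htrans : ∀ a b : Fin p, ∃ g ∈ G, g a = b) :
    IsSolvable G ∨
      ∀ a b c d : Fin p, a ≠ b → c ≠ d → ∃ g ∈ G, g a = c ∧ g b = d := by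
  classical
  haveI : Fact p.Prime := ⟨hp⟩
  haveI : Fintype ↥G := Fintype.ofFinite _
  -- `p` divides the order of `G`
  have hx0 : Fin p := ⟨0, hp.pos⟩
  have horb : MulAction.orbit (↥G) hx0 = Set.univ := by
    ext y
    simp only [Set.mem_univ, iff_true, MulAction.mem_orbit_iff]
    obtain ⟨g, hg, hgy⟩ := htrans hx0 y
    exact ⟨⟨g, hg⟩, hgy⟩
  have hdvd : p ∣ Fintype.card ↥G := by
    have := MulAction.card_orbit_mul_card_stabilizer_eq_card_group (↥G) hx0
    have hcard : Fintype.card (MulAction.orbit (↥G) hx0) = p :=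
      (Fintype.card_congr ((Equiv.setCongr horb).trans (Equiv.Set.univ _))).trans
        (Fintype.card_fin p)
    rw [hcard] at this
    exact ⟨_, this.symm⟩
  obtain ⟨σ', hσ'⟩ := exists_prime_orderOf_dvd_card p hdvd
  set σ : Equiv.Perm (Fin p) := (σ' : Equiv.Perm (Fin p)) with hσdef
  have hσG : σ ∈ G := σ'.2
  have hordσ : orderOf σ = p :=
    (orderOf_injective G.subtype G.subtype_injective σ').trans hσ'
  have hσ1 : σ ≠ 1 := by
    intro h
    rw [h, orderOf_one] at hordσ
    exact hp.one_lt.ne hordσ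
  obtain ⟨x₀, hx₀⟩ : ∃ x, σ x ≠ x := by
    by_contra h
    push_neg at h
    exact hσ1 (Equiv.ext h)
  -- fixed point lemma
  have hfix : ∀ c : ZMod p, (σ ^ c.val) x₀ = x₀ → c = 0 := by
    intro c hc
    by_contra hc0
    have hiter : ∀ n : ℕ, ((σ ^ c.val) ^ n) x₀ = x₀ := by
      intro n
      induction n with
      | zero => rfl
      | succ n ih =>
        rw [pow_succ']
        show (σ ^ c.val) (((σ ^ c.val) ^ n) x₀) = x₀
        rw [ih, hc]
    set n := (c⁻¹ : ZMod p).val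
    have h1 : (σ ^ (c.val * n)) x₀ = x₀ := by
      rw [pow_mul]
      exact hiter n
    have h2 : σ ^ (c.val * n) = σ ^ 1 := by
      rw [pow_eq_pow_iff_modEq, hordσ, ← ZMod.natCast_eq_natCast_iff]
      push_cast
      rw [ZMod.natCast_val, ZMod.cast_id, ZMod.natCast_val, ZMod.cast_id]
      rw [mul_inv_cancel₀ hc0]
    rw [h2, pow_one] at h1
    exact hx₀ h1
  set ν : ZMod p → Fin p := fun k => (σ ^ k.val) x₀ with hν
  have hsh : ∀ (u : ZMod p) (m : ℕ), (σ ^ m) (ν u) = ν (u + m) := by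
    intro u m
    rw [hν]
    show (σ ^ m) ((σ ^ u.val) x₀) = (σ ^ (u + (m : ZMod p)).val) x₀
    rw [← Equiv.Perm.mul_apply, ← pow_add]
    congr 1
    rw [pow_eq_pow_iff_modEq, hordσ, ← ZMod.natCast_eq_natCast_iff]
    push_cast
    rw [ZMod.natCast_val, ZMod.cast_id, ZMod.natCast_val, ZMod.cast_id]
    ring
  have hinj : Function.Injective ν := by
    intro a b hab
    have h1 : (σ ^ (-a : ZMod p).val) (ν a) = ν 0 := by
      rw [hsh]
      congr 1
      rw [ZMod.natCast_val, ZMod.cast_id]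
      ring
    have h2 : (σ ^ (-a : ZMod p).val) (ν b) = ν (b - a) := by
      rw [hsh]
      congr 1
      rw [ZMod.natCast_val, ZMod.cast_id]
      ring
    rw [hab] at h1
    rw [h1] at h2
    have hν0 : ν 0 = x₀ := by
      rw [hν]
      show (σ ^ (0 : ZMod p).val) x₀ = x₀
      rw [ZMod.val_zero, pow_zero]
      rfl
    have : (σ ^ (b - a : ZMod p).val) x₀ = x₀ := by
      rw [show (σ ^ (b - a : ZMod p).val) x₀ = ν (b - a) from rfl, ← h2, hν0]
    have := hfix _ this
    have : b = a := by linear_combination this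
    exact this.symm
  have hbij : Function.Bijective ν :=
    (Fintype.bijective_iff_injective_and_card ν).2 ⟨hinj, by simp [card_zmod]⟩
  set e : ZMod p ≃ Fin p := Equiv.ofBijective ν hbij with he
  have heapp : ∀ k, e k = ν k := fun k => rfl
  -- conjugation homomorphism
  set φ : Equiv.Perm (Fin p) →* Equiv.Perm (ZMod p) :=
    { toFun := fun g => (e.trans g).trans e.symm
      map_one' := by ext x; simp
      map_mul' := by intro g h; ext x; simp } with hφ
  have hφapp : ∀ (g : Equiv.Perm (Fin p)) (x : ZMod p), φ g x = e.symm (g (e x)) :=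
    fun g x => rfl
  set H : Subgroup (Equiv.Perm (ZMod p)) := G.map φ with hH
  have h1H : Equiv.addRight (1 : ZMod p) ∈ H := by
    refine ⟨σ, hσG, ?_⟩
    ext k
    show e.symm (σ (e k)) = k + 1
    rw [heapp]
    have : σ (ν k) = ν (k + 1) := by
      have := hsh k 1
      rwa [pow_one, Nat.cast_one] at this
    rw [this, show ν (k+1) = e (k+1) from rfl, Equiv.symm_apply_apply]
  rcases aux H h1H with hcase | hcase
  · -- solvable case
    left
    set ψ : ↥H →* (ZMod p)ˣ :=
      { toFun := fun h => Units.mk0 ((h : Equiv.Perm (ZMod p)) 1 - (h : Equiv.Perm (ZMod p)) 0)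
          (by
            obtain ⟨a, b, ha, hab⟩ := hcase h h.2
            rw [hab 1, hab 0]
            simpa using ha)
        map_one' := by
          apply Units.ext
          simp
        map_mul' := by
          intro g h
          apply Units.ext
          obtain ⟨ag, bg, hag, habg⟩ := hcase g g.2
          obtain ⟨ah, bh, hah, habh⟩ := hcase h h.2
          show ((g * h : ↥H) : Equiv.Perm (ZMod p)) 1 - ((g * h : ↥H) : Equiv.Perm (ZMod p)) 0
            = ((g : Equiv.Perm (ZMod p)) 1 - (g : Equiv.Perm (ZMod p)) 0)
            * ((h : Equiv.Perm (ZMod p)) 1 - (h : Equiv.Perm (ZMod p)) 0)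
          have hco : ((g * h : ↥H) : Equiv.Perm (ZMod p)) = (g : Equiv.Perm (ZMod p))
            * (h : Equiv.Perm (ZMod p)) := rfl
          rw [hco]
          simp only [Equiv.Perm.mul_apply]
          rw [habg _, habg _, habg _, habg _, habh 1, habh 0]
          ring } with hψ
    have hker : ∀ x y : ↥ψ.ker, x * y = y * x := by
      intro x y
      have hx := x.2
      have hy := y.2
      rw [MonoidHom.mem_ker] at hx hy
      have hslope : ∀ z : ↥H, ψ z = 1 →
          ∀ w, (z : Equiv.Perm (ZMod p)) w = w + (z : Equiv.Perm (ZMod p)) 0 := by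
        intro z hz w
        obtain ⟨a, b, ha, hab⟩ := hcase z z.2
        have hval : (z : Equiv.Perm (ZMod p)) 1 - (z : Equiv.Perm (ZMod p)) 0 = 1 := by
          have h3 : ((ψ z : (ZMod p)ˣ) : ZMod p) = ((1 : (ZMod p)ˣ) : ZMod p) :=
            congrArg Units.val hz
          exact h3
        rw [hab 1, hab 0] at hval
        have ha1 : a = 1 := by linear_combination hval
        rw [hab w, hab 0, ha1]
        ring
      apply Subtype.ext
      apply Subtype.ext
      apply Equiv.ext
      intro w
      have h1 := hslope (x : ↥H) hx
      have h2 := hslope (y : ↥H) hy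
      show ((x : ↥H) : Equiv.Perm (ZMod p)) (((y : ↥H) : Equiv.Perm (ZMod p)) w)
        = ((y : ↥H) : Equiv.Perm (ZMod p)) (((x : ↥H) : Equiv.Perm (ZMod p)) w)
      calc ((x : ↥H) : Equiv.Perm (ZMod p)) (((y : ↥H) : Equiv.Perm (ZMod p)) w)
          = (((y : ↥H) : Equiv.Perm (ZMod p)) w) + ((x : ↥H) : Equiv.Perm (ZMod p)) 0 := h1 _
        _ = (w + ((y : ↥H) : Equiv.Perm (ZMod p)) 0) + ((x : ↥H) : Equiv.Perm (ZMod p)) 0 := by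
            rw [h2 w]
        _ = (((x : ↥H) : Equiv.Perm (ZMod p)) w) + ((y : ↥H) : Equiv.Perm (ZMod p)) 0 := by
            rw [h1 w]; ring
        _ = ((y : ↥H) : Equiv.Perm (ZMod p)) (((x : ↥H) : Equiv.Perm (ZMod p)) w) := (h2 _).symm
    haveI : Group.IsSolvable ↥ψ.ker := isSolvable_of_comm hker
    haveI : Group.IsSolvable (ZMod p)ˣ := isSolvable_of_comm mul_comm
    haveI hHsolv : Group.IsSolvable ↥H :=
      solvable_of_ker_le_range ψ.ker.subtype ψ (le_of_eq (Subgroup.range_subtype _).symm)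
    have hφinj : Function.Injective φ := by
      intro g1 g2 hgg
      apply Equiv.ext
      intro x
      have h4 := congrArg (fun (π : Equiv.Perm (ZMod p)) => e (π (e.symm x))) hgg
      simp only [hφapp, Equiv.apply_symm_apply] at h4
      exact h4
    exact solvable_of_solvable_injective
      (f := (Subgroup.equivMapOfInjective G φ hφinj).toMonoidHom)
      (Subgroup.equivMapOfInjective G φ hφinj).injective
  · -- doubly transitive case
    right
    intro a b c d hab hcd
    obtain ⟨h, hhH, hh0, hhs⟩ := hcase (e.symm b - e.symm a) (e.symm d - e.symm c)
      (sub_ne_zero.2 (fun hh => hab (e.symm.injective hh).symm))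
      (sub_ne_zero.2 (fun hh => hcd (e.symm.injective hh).symm))
    set g' : Equiv.Perm (ZMod p) :=
      (Equiv.addRight (e.symm c)) * h * (Equiv.addRight (-(e.symm a))) with hg'
    have hg'H : g' ∈ H := H.mul_mem (H.mul_mem (addRight_mem h1H _) hhH) (addRight_mem h1H _)
    have hg'A : g' (e.symm a) = e.symm c := by
      rw [hg']
      simp only [Equiv.Perm.mul_apply, Equiv.coe_addRight]
      rw [show e.symm a + -(e.symm a) = (0 : ZMod p) by ring, hh0]
      ring
    have hg'B : g' (e.symm b) = e.symm d := by
      rw [hg']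
      simp only [Equiv.Perm.mul_apply, Equiv.coe_addRight]
      rw [show e.symm b + -(e.symm a) = e.symm b - e.symm a by ring, hhs]
      ring
    obtain ⟨g₁, hg₁G, hg₁⟩ := hg'H
    have hkey : ∀ x, g₁ (e x) = e (g' x) := by
      intro x
      rw [← hg₁, hφapp, Equiv.apply_symm_apply]
    refine ⟨g₁, hg₁G, ?_, ?_⟩
    · have := hkey (e.symm a)
      rwa [Equiv.apply_symm_apply, hg'A, Equiv.apply_symm_apply] at this
    · have := hkey (e.symm b)
      rwa [Equiv.apply_symm_apply, hg'B, Equiv.apply_symm_apply] at this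
end

section
/- Let n ≥ 2 be an integer and t ∈ ℚ, and let f(x) = (n−1)x^n − n x^{n−1} + t ∈ ℚ[x]. Then the discriminant of f satisfies disc(f) = (−1)^{n(n−1)/2} · n^n · (n−1)^{n−1} · t^{n−2} · (t−1). -/
open Polynomial

private lemma eval_deriv_prod {n : ℕ} (α : Fin n → ℂ) (i : Fin n) :
    eval (α i) (derivative (∏ j : Fin n, (X - C (α j)))) =
      ∏ j ∈ Finset.univ.erase i, (α i - α j) := by
  rw [← Finset.mul_prod_erase Finset.univ _ (Finset.mem_univ i), derivative_mul,
    derivative_X_sub_C, one_mul, eval_add, eval_mul, eval_sub, eval_X, eval_C, sub_self,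
    zero_mul, add_zero, eval_prod]
  simp

/-- The discriminant of `f(x) = (n-1)x^n - n x^(n-1) + t` equals
`(-1)^(n(n-1)/2) · n^n · (n-1)^(n-1) · t^(n-2) · (t-1)`. The discriminant is expressed as
`a^(2n-2) · ∏_{i<j} (α i - α j)^2` for any enumeration `α` of the complex roots of `f`,
where `a = n - 1` is the leading coefficient. -/
theorem discriminant_of_trinomial
    (n : ℕ) (hn : 2 ≤ n) (t : ℚ) (f : ℚ[X])
    (hf : f = C ((n : ℚ) - 1) * X ^ n - C (n : ℚ) * X ^ (n - 1) + C t)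
    (α : Fin n → ℂ)
    (hα : f.map (algebraMap ℚ ℂ) = C ((n : ℂ) - 1) * ∏ i : Fin n, (X - C (α i))) :
    ((n : ℂ) - 1) ^ (2 * n - 2) * ∏ i : Fin n, ∏ j ∈ Finset.Ioi i, (α i - α j) ^ 2 =
      (-1) ^ (n * (n - 1) / 2) * (n : ℂ) ^ n * ((n : ℂ) - 1) ^ (n - 1) *
        (t : ℂ) ^ (n - 2) * ((t : ℂ) - 1) := by
  obtain ⟨m, rfl⟩ : ∃ m, n = m + 2 := ⟨n - 2, by omega⟩
  set nn : ℂ := ((m + 2 : ℕ) : ℂ) with hnn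
  set a : ℂ := nn - 1 with ha_def
  set tc : ℂ := (t : ℂ) with htc
  have hnn' : nn = (m : ℂ) + 2 := by push_cast [hnn]; ring
  have ha : a ≠ 0 := by
    have h := Nat.cast_add_one_ne_zero (R := ℂ) m
    rw [ha_def, hnn']
    intro hz
    exact h (by push_cast; linear_combination hz)
  -- explicit form of the mapped polynomial
  have hfc : f.map (algebraMap ℚ ℂ) = C a * X ^ (m + 2) - C nn * X ^ (m + 1) + C tc := by
    have c1 : algebraMap ℚ ℂ (((m + 2 : ℕ) : ℚ) - 1) = a := by
      rw [map_sub, map_natCast, map_one, ha_def, hnn]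
    have c2 : algebraMap ℚ ℂ ((m + 2 : ℕ) : ℚ) = nn := by rw [map_natCast, hnn]
    have c3 : algebraMap ℚ ℂ t = tc := by rw [htc]; exact eq_ratCast _ t
    rw [hf, Polynomial.map_add, Polynomial.map_sub, Polynomial.map_mul, Polynomial.map_mul,
      Polynomial.map_pow, Polynomial.map_pow, map_X, map_C, map_C, map_C, c1, c2, c3]
    norm_num
  rw [hfc] at hα
  set A : ℂ := ∏ i, α i with hA_def
  set B : ℂ := ∏ i, (α i - 1) with hB_def
  set ε : ℂ := (-1 : ℂ) ^ (m + 2) with hε_def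
  have hεε : ε * ε = 1 := by
    rw [hε_def, ← pow_add]
    exact Even.neg_one_pow ⟨m + 2, by ring⟩
  -- evaluate at 0
  have h0 := congrArg (eval 0) hα
  simp only [eval_add, eval_sub, eval_mul, eval_pow, eval_C, eval_X, eval_prod] at h0
  have h0' : tc = a * (ε * A) := by
    have hl : a * (0 : ℂ) ^ (m + 2) - nn * (0 : ℂ) ^ (m + 1) + tc = tc := by
      rw [zero_pow (by omega : m + 2 ≠ 0), zero_pow (by omega : m + 1 ≠ 0)]; ring
    rw [hl] at h0
    rw [h0]
    congr 1
    calc ∏ x, ((0 : ℂ) - α x) = ∏ x, ((-1) * α x) :=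
          Finset.prod_congr rfl (fun i _ => by ring)
      _ = ε * A := by
          rw [Finset.prod_mul_distrib, Finset.prod_const, Finset.card_univ, Fintype.card_fin,
            hε_def, hA_def]
  have hA : a * A = ε * tc := by rw [h0']; linear_combination (-(a * A)) * hεε
  -- evaluate at 1
  have h1 := congrArg (eval 1) hα
  simp only [eval_add, eval_sub, eval_mul, eval_pow, eval_C, eval_X, eval_prod] at h1
  have h1' : tc - 1 = a * (ε * B) := by
    have hl : a * (1 : ℂ) ^ (m + 2) - nn * (1 : ℂ) ^ (m + 1) + tc = tc - 1 := by
      rw [ha_def]; ring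
    rw [hl] at h1
    rw [h1]
    congr 1
    calc ∏ x, ((1 : ℂ) - α x) = ∏ x, ((-1) * (α x - 1)) :=
          Finset.prod_congr rfl (fun i _ => by ring)
      _ = ε * B := by
          rw [Finset.prod_mul_distrib, Finset.prod_const, Finset.card_univ, Fintype.card_fin,
            hε_def, hB_def]
  have hB : a * B = ε * (tc - 1) := by rw [h1']; linear_combination (-(a * B)) * hεε
  -- derivative, evaluated at the roots, two ways
  have hd : ∀ i : Fin (m + 2),
      a * ∏ j ∈ Finset.univ.erase i, (α i - α j) = nn * a * (α i) ^ m * (α i - 1) := by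
    intro i
    have hD := congrArg (fun p => eval (α i) (derivative p)) hα
    simp only [derivative_add, derivative_sub, derivative_mul, derivative_C, derivative_pow,
      derivative_X, zero_mul, zero_add, eval_add, eval_sub, eval_mul, eval_pow, eval_C, eval_X,
      mul_one, eval_natCast, eval_zero, add_zero] at hD
    rw [eval_deriv_prod α i] at hD
    rw [← hD]
    simp only [show m + 2 - 1 = m + 1 from rfl, show m + 1 - 1 = m from rfl]
    rw [ha_def, hnn']
    push_cast
    ring
  set D : ℂ := ∏ i, ∏ j ∈ Finset.univ.erase i, (α i - α j) with hD_def
  have h2 : (∏ i, (a * ∏ j ∈ Finset.univ.erase i, (α i - α j))) = a ^ (m + 2) * D := by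
    rw [Finset.prod_mul_distrib, Finset.prod_const, Finset.card_univ, Fintype.card_fin, hD_def]
  have h3 : (∏ i, (nn * a * (α i) ^ m * (α i - 1)))
      = nn ^ (m + 2) * a ^ (m + 2) * A ^ m * B := by
    rw [Finset.prod_mul_distrib, Finset.prod_mul_distrib, Finset.prod_const,
      Finset.prod_pow, Finset.card_univ, Fintype.card_fin, hA_def, hB_def, mul_pow]
  have hprod : a ^ (m + 2) * D = nn ^ (m + 2) * a ^ (m + 2) * A ^ m * B := by
    rw [← h2, ← h3]
    exact Finset.prod_congr rfl fun i _ => hd i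
  have hD' : D = nn ^ (m + 2) * A ^ m * B :=
    mul_left_cancel₀ (pow_ne_zero (m + 2) ha)
      (hprod.trans (by ring))
  -- sign lemma
  set s : ℕ := (m + 2) * ((m + 2) - 1) / 2 with hs_def
  set P : ℂ := ∏ i, ∏ j ∈ Finset.Ioi i, (α i - α j) ^ 2 with hP_def
  have key := Finset.prod_prod_Ioi_mul_eq_prod_prod_off_diag (fun i j : Fin (m + 2) => α j - α i)
  have lhs_eq : (∏ i, ∏ j ∈ Finset.Ioi i, ((α i - α j) * (α j - α i))) = (-1) ^ s * P := by
    have step : ∀ i : Fin (m + 2), (∏ j ∈ Finset.Ioi i, ((α i - α j) * (α j - α i)))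
        = (-1 : ℂ) ^ (Finset.Ioi i).card * ∏ j ∈ Finset.Ioi i, (α i - α j) ^ 2 := by
      intro i
      calc (∏ j ∈ Finset.Ioi i, ((α i - α j) * (α j - α i)))
          = ∏ j ∈ Finset.Ioi i, ((-1) * (α i - α j) ^ 2) :=
            Finset.prod_congr rfl (fun j _ => by ring)
        _ = (-1 : ℂ) ^ (Finset.Ioi i).card * ∏ j ∈ Finset.Ioi i, (α i - α j) ^ 2 := by
            rw [Finset.prod_mul_distrib, Finset.prod_const]
    rw [Finset.prod_congr rfl (fun i _ => step i), Finset.prod_mul_distrib,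
      Finset.prod_pow_eq_pow_sum, hP_def]
    congr 2
    simp only [Fin.card_Ioi]
    rw [Fin.sum_univ_eq_sum_range (fun j => m + 2 - 1 - j),
      Finset.sum_range_reflect (fun j => j) (m + 2), Finset.sum_range_id]
  have rhs_eq : (∏ i, ∏ j ∈ ({i}ᶜ : Finset (Fin (m + 2))), (α i - α j)) = D := by
    rw [hD_def]
    exact Finset.prod_congr rfl fun i _ => by rw [Finset.compl_singleton]
  have hsP : (-1 : ℂ) ^ s * P = D := by
    rw [← lhs_eq, key, ← hD_def.symm]
    exact Finset.prod_congr rfl fun i _ => Finset.prod_congr (by ext j; simp) fun j _ => rfl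
  have hsign : P = (-1 : ℂ) ^ s * D := by
    calc P = (-1 : ℂ) ^ s * ((-1 : ℂ) ^ s * P) := by
          rw [← mul_assoc, ← pow_add, Even.neg_one_pow ⟨s, by ring⟩, one_mul]
      _ = (-1 : ℂ) ^ s * D := by rw [hsP]
  -- assemble
  have e3 : 2 * (m + 2) - 2 = 2 * m + 2 := by omega
  rw [show ∏ i, ∏ j ∈ Finset.Ioi i, (α i - α j) ^ 2 = P from hP_def.symm] at *
  simp only [show m + 2 - 1 = m + 1 from rfl, show m + 2 - 2 = m from rfl]
  rw [e3, hsign, hD']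
  have hεm : ε ^ (m + 1) = 1 := by
    rw [hε_def, ← pow_mul]
    exact Even.neg_one_pow (by rw [Nat.mul_comm]; exact Nat.even_mul_succ_self (m + 1))
  clear_value nn a tc A B ε D s P
  have keyc : a ^ (2 * m + 2) * (nn ^ (m + 2) * A ^ m * B)
      = nn ^ (m + 2) * a ^ (m + 1) * tc ^ m * (tc - 1) := by
    calc a ^ (2 * m + 2) * (nn ^ (m + 2) * A ^ m * B)
        = nn ^ (m + 2) * a ^ (m + 1) * ((a * A) ^ m * (a * B)) := by ring
      _ = nn ^ (m + 2) * a ^ (m + 1) * ((ε * tc) ^ m * (ε * (tc - 1))) := by rw [hA, hB]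
      _ = nn ^ (m + 2) * a ^ (m + 1) * (ε ^ (m + 1) * (tc ^ m * (tc - 1))) := by ring
      _ = nn ^ (m + 2) * a ^ (m + 1) * tc ^ m * (tc - 1) := by rw [hεm]; ring
  linear_combination ((-1 : ℂ) ^ s) * keyc
end

section
/- Let m be an integer and let f(x) = (22m² + 506)x^23 − (23m² + 529)x^22 + 23 ∈ ℚ[x]. Then the discriminant of f satisfies disc(f) = 2^22 · 11^22 · 23^44 · m² · (23 + m²)^22; in particular, disc(f) is the square of a rational number. -/
open Polynomial

/-- The discriminant of `f(x) = (22m² + 506)x²³ − (23m² + 529)x²² + 23` equals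
`2²² · 11²² · 23⁴⁴ · m² · (23 + m²)²²`, which is the square of a rational number. The
discriminant is expressed as `a^(2·23−2) · ∏_{i<j} (α i − α j)²` for any enumeration `α`
of the complex roots of `f`, where `a = 22m² + 506` is the leading coefficient. -/
theorem discriminant_degree_23_family
    (m : ℤ) (f : ℚ[X])
    (hf : f = C (22 * (m : ℚ) ^ 2 + 506) * X ^ 23 -
        C (23 * (m : ℚ) ^ 2 + 529) * X ^ 22 + C 23)
    (α : Fin 23 → ℂ)
    (hα : f.map (algebraMap ℚ ℂ) =
      C (22 * (m : ℂ) ^ 2 + 506) * ∏ i : Fin 23, (X - C (α i))) :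
    (22 * (m : ℂ) ^ 2 + 506) ^ (2 * 23 - 2) *
        ∏ i : Fin 23, ∏ j ∈ Finset.Ioi i, (α i - α j) ^ 2 =
      2 ^ 22 * 11 ^ 22 * 23 ^ 44 * (m : ℂ) ^ 2 * (23 + (m : ℂ) ^ 2) ^ 22 ∧
    ∃ q : ℚ, (22 * (m : ℂ) ^ 2 + 506) ^ (2 * 23 - 2) *
        ∏ i : Fin 23, ∏ j ∈ Finset.Ioi i, (α i - α j) ^ 2 = (q : ℂ) ^ 2 := by
  classical
  have hcz : (22 * (m : ℂ) ^ 2 + 506) ≠ 0 := by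
    have h1 : (22 * m ^ 2 + 506 : ℤ) ≠ 0 := by positivity
    have h2 : ((22 * m ^ 2 + 506 : ℤ) : ℂ) ≠ 0 := Int.cast_ne_zero.mpr h1
    push_cast at h2
    convert h2 using 2
  have hF : (C (22 * (m : ℂ) ^ 2 + 506) * X ^ 23 -
        C (23 * (m : ℂ) ^ 2 + 529) * X ^ 22 + C 23 : ℂ[X])
      = C (22 * (m : ℂ) ^ 2 + 506) * ∏ i : Fin 23, (X - C (α i)) := by
    rw [hf] at hα
    simp only [Polynomial.map_add, Polynomial.map_sub, Polynomial.map_mul,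
      Polynomial.map_pow, Polynomial.map_C, Polynomial.map_X, eq_ratCast] at hα
    push_cast at hα
    convert hα using 3
  -- product of (-g i) over 23 indices flips the sign
  have hneg : ∀ g : Fin 23 → ℂ, (∏ i : Fin 23, -(g i)) = - ∏ i : Fin 23, g i := by
    intro g
    calc (∏ i : Fin 23, -(g i)) = ∏ i : Fin 23, (-1 : ℂ) * g i := by simp
      _ = (∏ _i : Fin 23, (-1 : ℂ)) * ∏ i : Fin 23, g i := Finset.prod_mul_distrib
      _ = - ∏ i : Fin 23, g i := by norm_num
  -- value at 0 : product of roots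
  have hA : (22 * (m : ℂ) ^ 2 + 506) * ∏ i : Fin 23, α i = -23 := by
    have h0 := congrArg (eval 0) hF
    simp only [eval_add, eval_sub, eval_mul, eval_pow, eval_C, eval_X, eval_prod] at h0
    simp only [zero_sub] at h0
    rw [hneg] at h0
    linear_combination h0
  -- value at 1
  have hB : (22 * (m : ℂ) ^ 2 + 506) * ∏ i : Fin 23, (α i - 1) = (m : ℂ) ^ 2 := by
    have h1 := congrArg (eval 1) hF
    simp only [eval_add, eval_sub, eval_mul, eval_pow, eval_C, eval_X, eval_prod] at h1
    have hflip : ∀ i : Fin 23, (1 : ℂ) - α i = -(α i - 1) := fun i => by ring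
    simp only [hflip] at h1
    rw [hneg] at h1
    linear_combination h1
  -- value of the derivative at each root
  have key : ∀ i : Fin 23,
      506 * ((m : ℂ) ^ 2 + 23) * (α i) ^ 21 * (α i - 1)
        = (22 * (m : ℂ) ^ 2 + 506) * ∏ j ∈ Finset.univ.erase i, (α i - α j) := by
    intro i
    have hsplit : (∏ j : Fin 23, (X - C (α j)) : ℂ[X])
        = (X - C (α i)) * ∏ j ∈ Finset.univ.erase i, (X - C (α j)) :=
      (Finset.mul_prod_erase _ _ (Finset.mem_univ i)).symm
    have hd := congrArg (fun p => eval (α i) (derivative p)) hF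
    rw [hsplit] at hd
    simp only [derivative_add, derivative_sub, derivative_mul, derivative_C,
      derivative_X_pow, derivative_X, eval_add, eval_sub, eval_mul, eval_pow,
      eval_C, eval_X, eval_one, eval_zero, eval_prod, zero_mul, mul_zero,
      zero_add, add_zero, mul_one, sub_self] at hd
    push_cast at hd
    linear_combination hd
  -- take the product of `key` over all i
  have hbig : (22 * (m : ℂ) ^ 2 + 506) ^ 23 *
        ∏ i : Fin 23, ∏ j ∈ Finset.univ.erase i, (α i - α j)
      = (506 * ((m : ℂ) ^ 2 + 23)) ^ 23 * (∏ i : Fin 23, α i) ^ 21 *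
        ∏ i : Fin 23, (α i - 1) := by
    have := Finset.prod_congr rfl (fun i (_ : i ∈ Finset.univ) => key i)
    calc (22 * (m : ℂ) ^ 2 + 506) ^ 23 *
          ∏ i : Fin 23, ∏ j ∈ Finset.univ.erase i, (α i - α j)
        = ∏ i : Fin 23, ((22 * (m : ℂ) ^ 2 + 506) *
            ∏ j ∈ Finset.univ.erase i, (α i - α j)) := by
          rw [Finset.prod_mul_distrib, Finset.prod_const, Finset.card_univ,
            Fintype.card_fin]
      _ = ∏ i : Fin 23, (506 * ((m : ℂ) ^ 2 + 23) * (α i) ^ 21 * (α i - 1)) := this.symm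
      _ = (506 * ((m : ℂ) ^ 2 + 23)) ^ 23 * (∏ i : Fin 23, α i) ^ 21 *
            ∏ i : Fin 23, (α i - 1) := by
          rw [Finset.prod_mul_distrib, Finset.prod_mul_distrib, Finset.prod_const,
            Finset.prod_pow, Finset.card_univ, Fintype.card_fin]
  -- off-diagonal product versus squared differences over i < j
  have hoff : (∏ i : Fin 23, ∏ j ∈ Finset.univ.erase i, (α i - α j))
      = - ∏ i : Fin 23, ∏ j ∈ Finset.Ioi i, (α i - α j) ^ 2 := by
    have h1 := Finset.prod_prod_Ioi_mul_eq_prod_prod_off_diag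
      (f := fun j i => α i - α j)
    calc (∏ i : Fin 23, ∏ j ∈ Finset.univ.erase i, (α i - α j))
        = ∏ i : Fin 23, ∏ j ∈ ({i}ᶜ : Finset (Fin 23)), (α i - α j) := by
          refine Finset.prod_congr rfl fun i _ => ?_
          rw [Finset.compl_eq_univ_sdiff, Finset.sdiff_singleton_eq_erase]
      _ = ∏ i : Fin 23, ∏ j ∈ Finset.Ioi i, ((α i - α j) * (α j - α i)) := h1.symm
      _ = ∏ i : Fin 23, ∏ j ∈ Finset.Ioi i, ((-1 : ℂ) * (α i - α j) ^ 2) := by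
          refine Finset.prod_congr rfl fun i _ => Finset.prod_congr rfl fun j _ => by ring
      _ = ∏ i : Fin 23, ((-1 : ℂ) ^ (Finset.Ioi i).card *
            ∏ j ∈ Finset.Ioi i, (α i - α j) ^ 2) := by
          refine Finset.prod_congr rfl fun i _ => ?_
          rw [Finset.prod_mul_distrib, Finset.prod_const]
      _ = (-1 : ℂ) ^ (∑ i : Fin 23, (Finset.Ioi i).card) *
            ∏ i : Fin 23, ∏ j ∈ Finset.Ioi i, (α i - α j) ^ 2 := by
          rw [Finset.prod_mul_distrib, Finset.prod_pow_eq_pow_sum]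
      _ = - ∏ i : Fin 23, ∏ j ∈ Finset.Ioi i, (α i - α j) ^ 2 := by
          have hsum : (∑ i : Fin 23, (Finset.Ioi i).card) = 253 := by
            simp [Fin.card_Ioi, Fin.sum_univ_succ]
          rw [hsum]
          norm_num
  rw [hoff] at hbig
  -- main identity with one extra factor of the leading coefficient
  have h21 : ((22 * (m : ℂ) ^ 2 + 506) * ∏ i : Fin 23, α i) ^ 21 = ((-23 : ℂ)) ^ 21 := by
    rw [hA]
  have hmain : (22 * (m : ℂ) ^ 2 + 506) ^ 45 *
        ∏ i : Fin 23, ∏ j ∈ Finset.Ioi i, (α i - α j) ^ 2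
      = (506 * ((m : ℂ) ^ 2 + 23)) ^ 23 * 23 ^ 21 * (m : ℂ) ^ 2 := by
    linear_combination (-(22 * (m : ℂ) ^ 2 + 506) ^ 22) * hbig +
      (-((506 * ((m : ℂ) ^ 2 + 23)) ^ 23 *
        ((22 * (m : ℂ) ^ 2 + 506) * ∏ i : Fin 23, (α i - 1)))) * h21 +
      ((506 * ((m : ℂ) ^ 2 + 23)) ^ 23 * (23 : ℂ) ^ 21) * hB
  have hfin : (22 * (m : ℂ) ^ 2 + 506) ^ (2 * 23 - 2) *
        ∏ i : Fin 23, ∏ j ∈ Finset.Ioi i, (α i - α j) ^ 2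
      = 2 ^ 22 * 11 ^ 22 * 23 ^ 44 * (m : ℂ) ^ 2 * (23 + (m : ℂ) ^ 2) ^ 22 := by
    have h45 : (22 * (m : ℂ) ^ 2 + 506) * ((22 * (m : ℂ) ^ 2 + 506) ^ 44 *
          ∏ i : Fin 23, ∏ j ∈ Finset.Ioi i, (α i - α j) ^ 2)
        = (22 * (m : ℂ) ^ 2 + 506) *
          (2 ^ 22 * 11 ^ 22 * 23 ^ 44 * (m : ℂ) ^ 2 * (23 + (m : ℂ) ^ 2) ^ 22) := by
      linear_combination hmain
    have := mul_left_cancel₀ hcz h45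
    norm_num at this ⊢
    convert this using 2
  refine ⟨hfin, 2 ^ 11 * 11 ^ 11 * 23 ^ 22 * (m : ℚ) * (23 + (m : ℚ) ^ 2) ^ 11, ?_⟩
  rw [hfin]
  push_cast
  ring
end

section
/- Let m be an integer and let f(x) = (22m² + 506)x^23 − (23m² + 529)x^22 + 23 ∈ ℚ[x]. Then f has at most 3 real roots; equivalently, f has at least 20 non-real complex roots. -/
open Polynomial Set

private lemma gHasDeriv (A : ℝ) (x : ℝ) :
    HasDerivAt (fun x : ℝ => (22*A+506)*x^23 - (23*A+529)*x^22 + 23)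
      ((506*A+11638) * (x^21*(x-1))) x := by
  have h := ((((hasDerivAt_pow 23 x).const_mul (22*A+506)).sub
      ((hasDerivAt_pow 22 x).const_mul (23*A+529))).add_const 23)
  refine h.congr_deriv ?_
  norm_num
  ring

private lemma gDeriv (A : ℝ) (x : ℝ) :
    deriv (fun x : ℝ => (22*A+506)*x^23 - (23*A+529)*x^22 + 23) x
      = (506*A+11638) * (x^21*(x-1)) := (gHasDeriv A x).deriv

private lemma gCont (A : ℝ) :
    Continuous (fun x : ℝ => (22*A+506)*x^23 - (23*A+529)*x^22 + 23) := by
  continuity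

private lemma gMono1 (A : ℝ) (hA : 0 ≤ A) :
    StrictMonoOn (fun x : ℝ => (22*A+506)*x^23 - (23*A+529)*x^22 + 23) (Iic 0) := by
  apply strictMonoOn_of_deriv_pos (convex_Iic 0) (gCont A).continuousOn
  intro x hx
  rw [interior_Iic] at hx
  rw [gDeriv]
  have hx' : x < 0 := hx
  have h1 : x ^ 21 < 0 := Odd.pow_neg ⟨10, by norm_num⟩ hx'
  have h2 : x - 1 < 0 := by linarith
  have : (0:ℝ) < 506*A+11638 := by linarith
  exact mul_pos this (mul_pos_of_neg_of_neg h1 h2)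

private lemma gAnti (A : ℝ) (hA : 0 ≤ A) :
    StrictAntiOn (fun x : ℝ => (22*A+506)*x^23 - (23*A+529)*x^22 + 23) (Icc 0 1) := by
  apply strictAntiOn_of_deriv_neg (convex_Icc 0 1) (gCont A).continuousOn
  intro x hx
  rw [interior_Icc] at hx
  rw [gDeriv]
  have h1 : 0 < x ^ 21 := pow_pos hx.1 21
  have h2 : x - 1 < 0 := by linarith [hx.2]
  have : (0:ℝ) < 506*A+11638 := by linarith
  exact mul_neg_of_pos_of_neg this (mul_neg_of_pos_of_neg h1 h2)

private lemma gMono2 (A : ℝ) (hA : 0 ≤ A) :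
    StrictMonoOn (fun x : ℝ => (22*A+506)*x^23 - (23*A+529)*x^22 + 23) (Ici 1) := by
  apply strictMonoOn_of_deriv_pos (convex_Ici 1) (gCont A).continuousOn
  intro x hx
  rw [interior_Ici] at hx
  rw [gDeriv]
  have hx' : (1:ℝ) < x := hx
  have h1 : 0 < x ^ 21 := pow_pos (by linarith) 21
  have h2 : 0 < x - 1 := by linarith
  have : (0:ℝ) < 506*A+11638 := by linarith
  positivity

/-- The real root set facts. -/
private lemma realRoots (A : ℝ) (hA : 0 ≤ A) :
    {x : ℝ | (22*A+506)*x^23 - (23*A+529)*x^22 + 23 = 0}.Finite ∧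
    {x : ℝ | (22*A+506)*x^23 - (23*A+529)*x^22 + 23 = 0}.ncard ≤ 3 := by
  set g := fun x : ℝ => (22*A+506)*x^23 - (23*A+529)*x^22 + 23 with hg
  set S := {x : ℝ | g x = 0} with hS
  have h1 : (S ∩ Iic 0).Subsingleton := by
    intro x hx y hy
    exact (gMono1 A hA).injOn hx.2 hy.2 (hx.1.trans hy.1.symm)
  have h2 : (S ∩ Icc 0 1).Subsingleton := by
    intro x hx y hy
    exact (gAnti A hA).injOn hx.2 hy.2 (hx.1.trans hy.1.symm)
  have h3 : (S ∩ Ici 1).Subsingleton := by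
    intro x hx y hy
    exact (gMono2 A hA).injOn hx.2 hy.2 (hx.1.trans hy.1.symm)
  have hcover : S = (S ∩ Iic 0) ∪ (S ∩ Icc 0 1) ∪ (S ∩ Ici 1) := by
    ext x
    simp only [Set.mem_union, Set.mem_inter_iff, Set.mem_Iic, Set.mem_Icc, Set.mem_Ici]
    constructor
    · intro hx
      rcases le_or_gt x 0 with h | h
      · exact Or.inl (Or.inl ⟨hx, h⟩)
      · rcases le_or_gt x 1 with h' | h'
        · exact Or.inl (Or.inr ⟨hx, le_of_lt h, h'⟩)
        · exact Or.inr ⟨hx, le_of_lt h'⟩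
    · rintro ((⟨h, _⟩ | ⟨h, _⟩) | ⟨h, _⟩) <;> exact h
  constructor
  · rw [hcover]
    exact ((h1.finite.union h2.finite).union h3.finite)
  · calc S.ncard = ((S ∩ Iic 0) ∪ (S ∩ Icc 0 1) ∪ (S ∩ Ici 1)).ncard := by
          conv_lhs => rw [hcover]
    _ ≤ ((S ∩ Iic 0) ∪ (S ∩ Icc 0 1)).ncard + (S ∩ Ici 1).ncard := Set.ncard_union_le _ _
    _ ≤ ((S ∩ Iic 0).ncard + (S ∩ Icc 0 1).ncard) + (S ∩ Ici 1).ncard :=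
          add_le_add_left (Set.ncard_union_le _ _) _
    _ ≤ 1 + 1 + 1 := by
          gcongr
          · exact (Set.ncard_le_one h1.finite).mpr fun a ha b hb => h1 ha hb
          · exact (Set.ncard_le_one h2.finite).mpr fun a ha b hb => h2 ha hb
          · exact (Set.ncard_le_one h3.finite).mpr fun a ha b hb => h3 ha hb
    _ = 3 := rfl

private lemma realRoots0 (A : ℝ) (hA0 : A = 0) :
    {x : ℝ | (22*A+506)*x^23 - (23*A+529)*x^22 + 23 = 0}.ncard ≤ 2 := by
  have hA : 0 ≤ A := le_of_eq hA0.symm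
  set g := fun x : ℝ => (22*A+506)*x^23 - (23*A+529)*x^22 + 23 with hg
  set S := {x : ℝ | g x = 0} with hS
  have hg1 : g 1 = 0 := by simp [hg, hA0]; ring
  have h1 : (S ∩ Iic 0).Subsingleton := by
    intro x hx y hy
    exact (gMono1 A hA).injOn hx.2 hy.2 (hx.1.trans hy.1.symm)
  have hsub : S ⊆ (S ∩ Iic 0) ∪ {1} := by
    intro x hx
    rcases le_or_gt x 0 with h | h
    · exact Or.inl ⟨hx, h⟩
    · rcases lt_trichotomy x 1 with h' | h' | h'
      · exfalso
        have h2 : g 1 < g x := (gAnti A hA) (Set.mem_Icc.mpr ⟨le_of_lt h, le_of_lt h'⟩)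
          (Set.mem_Icc.mpr ⟨zero_le_one, le_refl 1⟩) h'
        have hx' : g x = 0 := hx
        rw [hg1, hx'] at h2
        exact lt_irrefl 0 h2
      · exact Or.inr (by simp [h'])
      · exfalso
        have h2 : g 1 < g x := (gMono2 A hA) (Set.mem_Ici.mpr (le_refl 1))
          (Set.mem_Ici.mpr (le_of_lt h')) h'
        have hx' : g x = 0 := hx
        rw [hg1, hx'] at h2
        exact lt_irrefl 0 h2
  calc S.ncard ≤ ((S ∩ Iic 0) ∪ {1}).ncard :=
        Set.ncard_le_ncard hsub (h1.finite.union (Set.finite_singleton 1))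
  _ ≤ (S ∩ Iic 0).ncard + ({1} : Set ℝ).ncard := Set.ncard_union_le _ _
  _ ≤ 1 + 1 := by
        gcongr
        · exact (Set.ncard_le_one h1.finite).mpr fun a ha b hb => h1 ha hb
        · simp
  _ = 2 := rfl

/-- For any integer `m`, the polynomial `(22m² + 506)x²³ − (23m² + 529)x²² + 23` has at
most 3 real roots; equivalently, it has at least 20 non-real complex roots. -/
theorem real_roots_le_three_degree_23_family
    (m : ℤ) (f : ℚ[X])
    (hf : f = C (22 * (m : ℚ) ^ 2 + 506) * X ^ 23 -
        C (23 * (m : ℚ) ^ 2 + 529) * X ^ 22 + C 23) :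
    {x : ℝ | aeval x f = 0}.ncard ≤ 3 ∧
      20 ≤ {z : ℂ | aeval z f = 0 ∧ z.im ≠ 0}.ncard := by
  classical
  -- the real root set
  set SR := {x : ℝ | (22*((m:ℝ))^2+506)*x^23 - (23*((m:ℝ))^2+529)*x^22 + 23 = 0} with hSR
  have hevR : ∀ x : ℝ, aeval x f = (22*((m:ℝ))^2+506)*x^23 - (23*((m:ℝ))^2+529)*x^22 + 23 := by
    intro x
    rw [hf]
    simp only [map_add, map_sub, map_mul, map_pow, aeval_C, aeval_X, eq_ratCast]
    push_cast
    ring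
  have hSReq : {x : ℝ | aeval x f = 0} = SR := by
    ext x
    simp only [Set.mem_setOf_eq, hSR, hevR x]
  have hSRfin := (realRoots ((m:ℝ)^2) (sq_nonneg _)).1
  have hSR3 : SR.ncard ≤ 3 := (realRoots ((m:ℝ)^2) (sq_nonneg _)).2
  refine ⟨by rw [hSReq]; exact hSR3, ?_⟩
  -- complex side
  set A : ℂ := 22*(m:ℂ)^2+506 with hA
  set B : ℂ := 23*(m:ℂ)^2+529 with hB
  set F : ℂ[X] := C A * X^23 - C B * X^22 + C 23 with hFdef
  have hevC : ∀ z : ℂ, aeval z f = eval z F := by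
    intro z
    rw [hf, hFdef]
    simp only [map_add, map_sub, map_mul, map_pow, aeval_C, aeval_X, eq_ratCast,
      eval_add, eval_sub, eval_mul, eval_C, eval_pow, eval_X]
    rw [hA, hB]
    push_cast
    ring
  have ha : A ≠ 0 := by
    have haq : A = ((22*(m:ℚ)^2+506 : ℚ) : ℂ) := by rw [hA]; push_cast; ring
    rw [haq, Rat.cast_ne_zero]
    positivity
  have hc : (506*(m:ℂ)^2+11638) ≠ 0 := by
    have : (506*(m:ℂ)^2+11638) = ((506*(m:ℚ)^2+11638 : ℚ) : ℂ) := by push_cast; ring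
    rw [this, Rat.cast_ne_zero]
    positivity
  have hdeg : F.natDegree = 23 := by
    rw [hFdef]
    compute_degree!
  have hF0 : F ≠ 0 := fun h => by simp [h] at hdeg
  have hcard : F.roots.card = 23 :=
    (splits_iff_card_roots.mp (IsAlgClosed.splits F)).trans hdeg
  have hder : ∀ t : ℂ, eval t (derivative F) = (506*(m:ℂ)^2+11638) * (t^21*(t-1)) := by
    intro t
    rw [hFdef]
    simp only [derivative_add, derivative_sub, derivative_mul, derivative_C,
      derivative_X_pow, zero_mul, zero_add, eval_add, eval_sub, eval_mul, eval_C,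
      eval_pow, eval_X, eval_natCast]
    rw [hA, hB]
    push_cast
    norm_num
    ring
  have hder2 : eval 1 (derivative (derivative F)) = 506*(m:ℂ)^2+11638 := by
    rw [hFdef]
    simp only [derivative_add, derivative_sub, derivative_mul, derivative_C,
      derivative_X_pow, zero_mul, zero_add, eval_add, eval_sub, eval_mul, eval_C,
      eval_pow, eval_X, eval_natCast, one_pow]
    rw [hA, hB]
    push_cast
    norm_num
    ring
  have heval0 : eval 0 F = 23 := by simp [hFdef]
  have hmultle : ∀ z : ℂ, z ≠ 1 → rootMultiplicity z F ≤ 1 := by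
    intro z hz
    by_cases hr : IsRoot F z
    · have hz0 : z ≠ 0 := fun h => by simp [IsRoot, h, heval0] at hr
      have hd : ¬ IsRoot (derivative F) z := by
        rw [IsRoot, hder]
        exact mul_ne_zero hc (mul_ne_zero (pow_ne_zero _ hz0) (sub_ne_zero.mpr hz))
      have := rootMultiplicity_sub_one_le_derivative_rootMultiplicity F z
      rw [rootMultiplicity_eq_zero hd] at this
      omega
    · rw [rootMultiplicity_eq_zero hr]; omega
  have hmult1 : rootMultiplicity 1 F ≤ 2 := by
    have h2 : ¬ IsRoot (derivative (derivative F)) 1 := by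
      rw [IsRoot, hder2]; exact hc
    have hb := rootMultiplicity_sub_one_le_derivative_rootMultiplicity (derivative F) 1
    rw [rootMultiplicity_eq_zero h2] at hb
    have := rootMultiplicity_sub_one_le_derivative_rootMultiplicity F 1
    omega
  -- finset counting
  set T := F.roots.toFinset with hTdef
  set Tr := T.filter (fun z => z.im = 0) with hTr
  set Tn := T.filter (fun z => ¬ z.im = 0) with hTn
  have hTsplit : Tr.card + Tn.card = T.card :=
    Finset.card_filter_add_card_filter_not _
  have hsum : ∑ z ∈ T, F.roots.count z = 23 := by
    rw [hTdef, Multiset.toFinset_sum_count_eq]; exact hcard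
  have hcount1 : ∀ z ∈ T, 1 ≤ F.roots.count z := fun z hz =>
    Multiset.one_le_count_iff_mem.mpr (Multiset.mem_toFinset.mp hz)
  have hcount_le : ∀ z ∈ T, F.roots.count z ≤ if z = 1 then 2 else 1 := by
    intro z _
    rw [count_roots]
    split
    · next h => rw [h]; exact hmult1
    · next h => exact hmultle z h
  have hTcard_ge : 22 ≤ T.card := by
    have h2 : ∑ z ∈ T, F.roots.count z ≤ ∑ z ∈ T, (if z = 1 then 2 else 1) :=
      Finset.sum_le_sum hcount_le
    have h3 : ∑ z ∈ T, (if z = 1 then 2 else 1) = T.card + ∑ z ∈ T, (if z = 1 then 1 else 0) := by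
      rw [Finset.card_eq_sum_ones, ← Finset.sum_add_distrib]
      apply Finset.sum_congr rfl
      intro z _
      split <;> norm_num
    have h4 : ∑ z ∈ T, (if z = 1 then 1 else 0) ≤ 1 := by
      rw [Finset.sum_ite_eq' T (1:ℂ) (fun _ => 1)]
      split <;> norm_num
    omega
  -- real roots of F inject into SR
  have hreal : ∀ z : ℂ, z.im = 0 → eval z F = 0 → z.re ∈ SR := by
    intro z him hz
    have hz' : z = (z.re : ℂ) := Complex.ext (by simp) (by simp [him])
    rw [hz'] at hz
    have hcast : (((22*((m:ℝ))^2+506)*z.re^23 - (23*((m:ℝ))^2+529)*z.re^22 + 23 : ℝ) : ℂ) = 0 := by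
      rw [← hz, hFdef]
      simp only [eval_add, eval_sub, eval_mul, eval_C, eval_pow, eval_X]
      rw [hA, hB]
      push_cast
      ring
    exact Complex.ofReal_eq_zero.mp hcast
  have hinj : Set.InjOn Complex.re ↑Tr := by
    intro z hz w hw h
    have hz' := (Finset.mem_filter.mp (by exact_mod_cast hz)).2
    have hw' := (Finset.mem_filter.mp (by exact_mod_cast hw)).2
    exact Complex.ext h (hz'.trans hw'.symm)
  have hTr_le : Tr.card ≤ SR.ncard := by
    have h5 : (↑(Tr.image Complex.re) : Set ℝ) ⊆ SR := by
      intro x hx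
      obtain ⟨z, hzTr, hzx⟩ := Finset.mem_image.mp (by exact_mod_cast hx)
      have h1 := Finset.mem_filter.mp hzTr
      have h2 : eval z F = 0 := (mem_roots'.mp (Multiset.mem_toFinset.mp h1.1)).2
      subst hzx
      exact hreal z h1.2 h2
    calc Tr.card = (Tr.image Complex.re).card := (Finset.card_image_of_injOn hinj).symm
    _ = (↑(Tr.image Complex.re) : Set ℝ).ncard := (Set.ncard_coe_finset _).symm
    _ ≤ SR.ncard := Set.ncard_le_ncard h5 hSRfin
  -- identify the goal set with Tn
  have hset : {z : ℂ | aeval z f = 0 ∧ z.im ≠ 0} = ↑Tn := by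
    ext z
    simp only [Set.mem_setOf_eq, hTn, Finset.coe_filter, Finset.mem_coe,
      Multiset.mem_toFinset, mem_roots', hF0, ne_eq, not_false_eq_true, true_and,
      IsRoot, hevC z, hTdef]
  rw [hset, Set.ncard_coe_finset]
  -- case split on m
  by_cases hm : m = 0
  · -- m = 0 : at most 2 real roots
    have hTr2 : Tr.card ≤ 2 := by
      refine hTr_le.trans ?_
      have := realRoots0 ((m:ℝ)^2) (by rw [hm]; norm_num)
      simpa [hSR] using this
    omega
  · -- m ≠ 0 : 1 is not a root, so all roots simple and T.card = 23
    have he1 : eval 1 F = -(m:ℂ)^2 := by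
      rw [hFdef]
      simp only [eval_add, eval_sub, eval_mul, eval_C, eval_pow, eval_X, one_pow]
      rw [hA, hB]
      ring
    have hm' : (m:ℂ) ≠ 0 := Int.cast_ne_zero.mpr hm
    have h1root : ¬ IsRoot F 1 := by
      rw [IsRoot, he1]
      simpa using pow_ne_zero 2 hm'
    have hcnt : ∀ z ∈ T, F.roots.count z = 1 := by
      intro z hz
      have hzr : IsRoot F z := (mem_roots'.mp (Multiset.mem_toFinset.mp hz)).2
      have hz1 : z ≠ 1 := fun h => h1root (h ▸ hzr)
      have := hcount1 z hz
      have h2 : F.roots.count z ≤ 1 := by rw [count_roots]; exact hmultle z hz1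
      omega
    have hT23 : T.card = 23 := by
      have : ∑ z ∈ T, F.roots.count z = ∑ z ∈ T, 1 := Finset.sum_congr rfl hcnt
      rw [this, Finset.sum_const, smul_eq_mul, mul_one] at hsum
      exact hsum
    have hTr3 : Tr.card ≤ 3 := hTr_le.trans hSR3
    omega
end
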